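/- arXiv:2007.01284 — 9 statements merged into one kernel-verified Lean document; each statement's English description precedes it below -/
import Mathlib

section
/- Let E be a real inner product space, let Φ : E → ℝ and Φ* ∈ ℝ satisfy Φ(y) ≥ Φ* for all y ∈ E, let ρ > 0, δ ≥ 0, let T be a positive integer, and let x^0, x^1, …, x^T be points of E such that Φ(x^{k+1}) + ρ‖x^{k+1} − x^k‖² ≤ Φ(x^k) + δ²/(2ρ) for every 0 ≤ k ≤ T − 1. Then there exists 0 ≤ k ≤ T − 1 with 2ρ‖x^{k+1} − x^k‖ ≤ 2·√( δ²/2 + ρ(Φ(x^0) − Φ*)/T ). -/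
/-- under the per-iteration sufficient-decrease inequality of an inexact
proximal point step, some consecutive pair of iterates among the first `T` satisfies
`2ρ‖x^{k+1} − x^k‖ ≤ 2√(δ²/2 + ρ(Φ(x⁰) − Φ*)/T)`. -/
theorem ippm_small_step_exists
    {E : Type*} [NormedAddCommGroup E] [InnerProductSpace ℝ E]
    (Φ : E → ℝ) (Φstar : ℝ) (hlb : ∀ y : E, Φ y ≥ Φstar)
    (ρ δ : ℝ) (hρ : 0 < ρ) (hδ : 0 ≤ δ)
    (T : ℕ) (hT : 0 < T) (x : ℕ → E)
    (hdec : ∀ k, k ≤ T - 1 →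
      Φ (x (k + 1)) + ρ * ‖x (k + 1) - x k‖ ^ 2 ≤ Φ (x k) + δ ^ 2 / (2 * ρ)) :
    ∃ k, k ≤ T - 1 ∧
      2 * ρ * ‖x (k + 1) - x k‖ ≤
        2 * Real.sqrt (δ ^ 2 / 2 + ρ * (Φ (x 0) - Φstar) / T) := by
  -- choose k minimizing the step norm over range T
  obtain ⟨k, hkmem, hkmin⟩ := Finset.exists_min_image (Finset.range T)
    (fun i => ‖x (i + 1) - x i‖) ⟨0, Finset.mem_range.mpr hT⟩
  have hkT : k < T := Finset.mem_range.mp hkmem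
  refine ⟨k, Nat.le_sub_one_of_lt hkT, ?_⟩
  -- telescoping sum bound
  have hsum : ∑ i ∈ Finset.range T, ρ * ‖x (i + 1) - x i‖ ^ 2 ≤
      (Φ (x 0) - Φ (x T)) + T * (δ ^ 2 / (2 * ρ)) := by
    have : ∑ i ∈ Finset.range T, ρ * ‖x (i + 1) - x i‖ ^ 2 ≤
        ∑ i ∈ Finset.range T, ((Φ (x i) - Φ (x (i + 1))) + δ ^ 2 / (2 * ρ)) := by
      apply Finset.sum_le_sum
      intro i hi
      have hi' : i ≤ T - 1 := Nat.le_sub_one_of_lt (Finset.mem_range.mp hi)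
      have := hdec i hi'
      linarith
    calc ∑ i ∈ Finset.range T, ρ * ‖x (i + 1) - x i‖ ^ 2
        ≤ ∑ i ∈ Finset.range T, ((Φ (x i) - Φ (x (i + 1))) + δ ^ 2 / (2 * ρ)) := this
      _ = (Φ (x 0) - Φ (x T)) + T * (δ ^ 2 / (2 * ρ)) := by
          rw [Finset.sum_add_distrib, Finset.sum_range_sub' (fun i => Φ (x i))]
          simp [mul_comm]
  -- min term times T ≤ sum
  have hmin : (T : ℝ) * (ρ * ‖x (k + 1) - x k‖ ^ 2) ≤
      ∑ i ∈ Finset.range T, ρ * ‖x (i + 1) - x i‖ ^ 2 := by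
    have := Finset.card_nsmul_le_sum (Finset.range T)
      (fun i => ρ * ‖x (i + 1) - x i‖ ^ 2) (ρ * ‖x (k + 1) - x k‖ ^ 2)
      (fun i hi => by
        have h := hkmin i hi
        have h0 : (0:ℝ) ≤ ‖x (k + 1) - x k‖ := norm_nonneg _
        show ρ * ‖x (k + 1) - x k‖ ^ 2 ≤ ρ * ‖x (i + 1) - x i‖ ^ 2
        exact mul_le_mul_of_nonneg_left (pow_le_pow_left₀ h0 h 2) hρ.le)
    simpa [Finset.card_range, nsmul_eq_mul] using this
  have hTpos : (0:ℝ) < T := by exact_mod_cast hT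
  have hlbT : Φstar ≤ Φ (x T) := hlb _
  have h2 : (T : ℝ) * (ρ * ‖x (k + 1) - x k‖ ^ 2) ≤
      (Φ (x 0) - Φstar) + T * (δ ^ 2 / (2 * ρ)) := by linarith
  have hc : ρ * (δ ^ 2 / (2 * ρ)) = δ ^ 2 / 2 := by
    field_simp
  have h3 := mul_le_mul_of_nonneg_left h2 hρ.le
  set A := δ ^ 2 / 2 + ρ * (Φ (x 0) - Φstar) / T with hA
  have hd0 : 0 ≤ Φ (x 0) - Φstar := by linarith [hlb (x 0)]
  have hA0 : 0 ≤ A := by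
    have : 0 ≤ ρ * (Φ (x 0) - Φstar) / T :=
      div_nonneg (mul_nonneg hρ.le hd0) hTpos.le
    have hd : 0 ≤ δ ^ 2 / 2 := by positivity
    rw [hA]; linarith
  have hsq : (ρ * ‖x (k + 1) - x k‖) ^ 2 ≤ A := by
    have heq : A = ((δ ^ 2 / 2) * T + ρ * (Φ (x 0) - Φstar)) / T := by
      rw [hA]; field_simp
    rw [heq, le_div_iff₀ hTpos]
    nlinarith [h3, hc, hTpos.le]
  have h0 : 0 ≤ ρ * ‖x (k + 1) - x k‖ := by positivity
  have h1 : ρ * ‖x (k + 1) - x k‖ ≤ Real.sqrt A :=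
    calc ρ * ‖x (k + 1) - x k‖ = Real.sqrt ((ρ * ‖x (k + 1) - x k‖) ^ 2) :=
          (Real.sqrt_sq h0).symm
      _ ≤ Real.sqrt A := Real.sqrt_le_sqrt hsq
  linarith
end

section
/- Let E be a real inner product space, let Φ : E → ℝ and Φ* ∈ ℝ satisfy Φ(y) ≥ Φ* for all y ∈ E and Φ(x^0) > Φ*, let ρ > 0 and ε > 0. Let (x^k)_{k≥0} and (g^k)_{k≥0} be sequences in E such that for every k ≥ 0: ‖g^k‖ ≤ ε/4 and, for all y ∈ E, Φ(y) + ρ‖y − x^k‖² ≥ Φ(x^{k+1}) + ρ‖x^{k+1} − x^k‖² + ⟨g^k, y − x^{k+1}⟩ + (ρ/2)‖y − x^{k+1}‖². Set T = ⌈32ρ(Φ(x^0) − Φ*)/ε²⌉. Then there exists 0 ≤ k ≤ T − 1 with 2ρ‖x^{k+1} − x^k‖ ≤ ε/2; moreover, for any index k with 2ρ‖x^{k+1} − x^k‖ ≤ ε/2, the vector h := g^k − 2ρ(x^{k+1} − x^k) satisfies ‖h‖ ≤ ε and Φ(y) ≥ Φ(x^{k+1}) + ⟨h, y − x^{k+1}⟩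 − (ρ/2)‖y − x^{k+1}‖² for all y ∈ E; that is, x^{k+1} is an ε-stationary point of the ρ-weakly convex function Φ. -/
/-- iPPM complexity theorem (Theorem 1 of the paper), sequence form.
Each `x^{k+1}` is an (ε/4)-approximate stationary point of the ρ-strongly convex
proximal subproblem `Φ_k(y) = Φ(y) + ρ‖y − x^k‖²` with certifying subgradient `g^k`.
Within `T = ⌈32ρ(Φ(x⁰) − Φ*)/ε²⌉` iterations the stopping criterion
`2ρ‖x^{k+1} − x^k‖ ≤ ε/2` is met, and any iterate meeting it is an ε-stationary
point of the ρ-weakly convex function Φ, certified by `h = g^k − 2ρ(x^{k+1} − x^k)`. -/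
theorem ippm_complexity
    {E : Type*} [NormedAddCommGroup E] [InnerProductSpace ℝ E]
    (Φ : E → ℝ) (Φstar : ℝ) (hlb : ∀ y : E, Φ y ≥ Φstar)
    (ρ ε : ℝ) (hρ : 0 < ρ) (hε : 0 < ε)
    (x g : ℕ → E) (h0 : Φ (x 0) > Φstar)
    (hg : ∀ k : ℕ, ‖g k‖ ≤ ε / 4)
    (hprox : ∀ k : ℕ, ∀ y : E,
      Φ y + ρ * ‖y - x k‖ ^ 2 ≥
        Φ (x (k + 1)) + ρ * ‖x (k + 1) - x k‖ ^ 2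
          + (inner ℝ (g k) (y - x (k + 1)) : ℝ)
          + ρ / 2 * ‖y - x (k + 1)‖ ^ 2) :
    (∃ k, k ≤ ⌈32 * ρ * (Φ (x 0) - Φstar) / ε ^ 2⌉₊ - 1 ∧
        2 * ρ * ‖x (k + 1) - x k‖ ≤ ε / 2) ∧
    (∀ k : ℕ, 2 * ρ * ‖x (k + 1) - x k‖ ≤ ε / 2 →
      ‖g k - (2 * ρ) • (x (k + 1) - x k)‖ ≤ ε ∧
      ∀ y : E, Φ y ≥ Φ (x (k + 1))
          + (inner ℝ (g k - (2 * ρ) • (x (k + 1) - x k)) (y - x (k + 1)) : ℝ)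
          - ρ / 2 * ‖y - x (k + 1)‖ ^ 2) := by
  constructor
  · -- existence of a small step within T iterations
    by_contra hcon
    push_neg at hcon
    set T := ⌈32 * ρ * (Φ (x 0) - Φstar) / ε ^ 2⌉₊ with hTdef
    have harg : 0 < 32 * ρ * (Φ (x 0) - Φstar) / ε ^ 2 := by
      have : 0 < Φ (x 0) - Φstar := by linarith
      positivity
    have hT1 : 1 ≤ T := Nat.ceil_pos.mpr harg
    have hstep : ∀ k, k < T → ε ^ 2 / (32 * ρ) < Φ (x k) - Φ (x (k + 1)) := by
      intro k hk
      have hbig : ε / 2 < 2 * ρ * ‖x (k + 1) - x k‖ := hcon k (by omega)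
      have hp := hprox k (x k)
      simp only [sub_self, norm_zero] at hp
      have hnrev : ‖x k - x (k + 1)‖ = ‖x (k + 1) - x k‖ := norm_sub_rev _ _
      have hinner : (inner ℝ (g k) (x k - x (k + 1)) : ℝ) ≥
          -(ε / 4) * ‖x (k + 1) - x k‖ := by
        have h1 : |(inner ℝ (g k) (x k - x (k + 1)) : ℝ)| ≤ ‖g k‖ * ‖x k - x (k + 1)‖ :=
          abs_real_inner_le_norm _ _
        have h2 : ‖g k‖ * ‖x k - x (k + 1)‖ ≤ (ε / 4) * ‖x (k + 1) - x k‖ := by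
          rw [hnrev]
          exact mul_le_mul_of_nonneg_right (hg k) (norm_nonneg _)
        have := neg_abs_le (inner ℝ (g k) (x k - x (k + 1)) : ℝ)
        linarith
      rw [hnrev] at hp
      set t := ‖x (k + 1) - x k‖ with ht
      have htgt : ε / (4 * ρ) < t := by
        rw [div_lt_iff₀ (by positivity)]
        linarith
      have htpos : 0 < t := lt_trans (by positivity) htgt
      have hfac : 0 < (t - ε / (4 * ρ)) * (t + ε / (12 * ρ)) := by
        apply mul_pos (by linarith) (by positivity)
      have htgt2 : ε < 4 * ρ * t := by
        rw [div_lt_iff₀ (by positivity : (0:ℝ) < 4 * ρ)] at htgt; linarith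
      have key : ε ^ 2 / (32 * ρ) < 3 * ρ / 2 * t ^ 2 - ε / 4 * t := by
        rw [div_lt_iff₀ (by positivity : (0:ℝ) < 32 * ρ)]
        have h32 : 0 < 32 * ρ := by positivity
        have := mul_pos hfac (by positivity : (0:ℝ) < 48 * ρ ^ 2)
        have hρne : ρ ≠ 0 := ne_of_gt hρ
        nlinarith [this]
      nlinarith [hp, hinner, key]
    have hsum : (T : ℝ) * (ε ^ 2 / (32 * ρ)) < Φ (x 0) - Φ (x T) := by
      have hne : (Finset.range T).Nonempty := Finset.nonempty_range_iff.mpr (by omega)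
      have h1 : ∑ i ∈ Finset.range T, (ε ^ 2 / (32 * ρ)) <
          ∑ i ∈ Finset.range T, (Φ (x i) - Φ (x (i + 1))) :=
        Finset.sum_lt_sum_of_nonempty hne (fun i hi => hstep i (Finset.mem_range.mp hi))
      rw [Finset.sum_range_sub' (fun i => Φ (x i))] at h1
      rw [Finset.sum_const, nsmul_eq_mul, Finset.card_range] at h1
      exact h1
    have hTa : (32 * ρ * (Φ (x 0) - Φstar) / ε ^ 2) ≤ (T : ℝ) := Nat.le_ceil _
    have hmul : (32 * ρ * (Φ (x 0) - Φstar) / ε ^ 2) * (ε ^ 2 / (32 * ρ)) ≤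
        (T : ℝ) * (ε ^ 2 / (32 * ρ)) :=
      mul_le_mul_of_nonneg_right hTa (by positivity)
    have hid : (32 * ρ * (Φ (x 0) - Φstar) / ε ^ 2) * (ε ^ 2 / (32 * ρ)) =
        Φ (x 0) - Φstar := by
      field_simp
    have hlbT := hlb (x T)
    rw [hid] at hmul
    linarith
  · -- stationarity certificate
    intro k hk
    have hnn : (0:ℝ) ≤ ‖x (k + 1) - x k‖ := norm_nonneg _
    constructor
    · have h1 : ‖g k - (2 * ρ) • (x (k + 1) - x k)‖ ≤
          ‖g k‖ + ‖(2 * ρ) • (x (k + 1) - x k)‖ := norm_sub_le _ _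
      rw [norm_smul, Real.norm_eq_abs, abs_of_pos (by positivity : (0:ℝ) < 2 * ρ)] at h1
      have := hg k
      linarith
    · intro y
      have hp := hprox k y
      have hexp : ‖y - x k‖ ^ 2 = ‖y - x (k + 1)‖ ^ 2
          + 2 * (inner ℝ (y - x (k + 1)) (x (k + 1) - x k) : ℝ)
          + ‖x (k + 1) - x k‖ ^ 2 := by
        have hdec : y - x k = (y - x (k + 1)) + (x (k + 1) - x k) := by abel
        rw [hdec, norm_add_sq_real]
      have hin : (inner ℝ (g k - (2 * ρ) • (x (k + 1) - x k)) (y - x (k + 1)) : ℝ)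
          = (inner ℝ (g k) (y - x (k + 1)) : ℝ)
            - 2 * ρ * (inner ℝ (x (k + 1) - x k) (y - x (k + 1)) : ℝ) := by
        rw [inner_sub_left, real_inner_smul_left]
      have hsym : (inner ℝ (y - x (k + 1)) (x (k + 1) - x k) : ℝ)
          = (inner ℝ (x (k + 1) - x k) (y - x (k + 1)) : ℝ) := real_inner_comm _ _
      rw [hexp, hsym] at hp
      rw [hin]
      nlinarith [hp]
end

section
/- Let n, l, m be positive integers, let A be a real l×n matrix and b ∈ ℝ^l, and let X = {x ∈ ℝⁿ : ⟨c_i, x⟩ ≤ d_i for all i = 1, …, m} be a polyhedron cut out by finitely many affine inequalities (c_i ∈ ℝⁿ, d_i ∈ ℝ). Assume X is bounded (hence compact) and that X ∩ {x ∈ ℝⁿ : A x = b} is nonempty. Then there exists a constant v > 0 such that for every x ∈ X, v‖Ax − b‖ ≤ dist(0, {Aᵀ(Ax − b) + z : z ∈ N_X(x)}). -/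
open Metric Module Submodule

section ConeHoffman

variable {E F : Type*} [NormedAddCommGroup E] [InnerProductSpace ℝ E] [FiniteDimensional ℝ E]
  [NormedAddCommGroup F] [NormedSpace ℝ F]

local notation "⟪" x ", " y "⟫" => @inner ℝ _ _ x y

private lemma le_infDist_of {α : Type*} [PseudoMetricSpace α] {s : Set α} {b : ℝ} {x : α}
    (hs : s.Nonempty) (h : ∀ y ∈ s, b ≤ dist x y) : b ≤ Metric.infDist x s := by
  by_contra hlt
  push_neg at hlt
  obtain ⟨y, hy, hd⟩ := (Metric.infDist_lt_iff hs).1 hlt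
  exact absurd (h y hy) (not_le.2 hd)

private lemma coneHoffman_aux (d : ℕ) :
    ∀ (m : ℕ) (c : Fin m → E) (A : E →ₗ[ℝ] F),
      finrank ℝ (span ℝ {x : E | ∀ i, ⟪c i, x⟫ ≤ 0}) ≤ d →
      ∃ θ : ℝ, 0 < θ ∧ ∀ x, (∀ i, ⟪c i, x⟫ ≤ 0) →
        Metric.infDist x {y : E | (∀ i, ⟪c i, y⟫ ≤ 0) ∧ A y = 0} ≤ θ * ‖A x‖ := by
  induction d with
  | zero =>
    intro m c A hrank
    refine ⟨1, one_pos, fun x hx => ?_⟩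
    have hx0 : x = 0 := by
      have h1 : span ℝ {x : E | ∀ i, ⟪c i, x⟫ ≤ 0} = ⊥ := by
        rw [← Submodule.finrank_eq_zero (R := ℝ)]
        omega
      have := Submodule.subset_span (R := ℝ) (s := {x : E | ∀ i, ⟪c i, x⟫ ≤ 0}) hx
      rw [h1] at this
      simpa using this
    subst hx0
    have h0 : (0:E) ∈ {y : E | (∀ i, ⟪c i, y⟫ ≤ 0) ∧ A y = 0} :=
      ⟨fun i => by simp, map_zero A⟩
    simp [Metric.infDist_zero_of_mem h0]
  | succ d ih =>
    intro m c A hrank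
    by_cases hu : ∃ u : E, (∀ i, ⟪c i, u⟫ ≤ 0) ∧ A u = 0 ∧ ‖u‖ = 1
    · obtain ⟨u, huK, huA, hu1⟩ := hu
      by_cases hJ : ∃ j, ⟪c j, u⟫ < 0
      · -- case B1 : some constraint is strictly negative on u
        set J : Finset (Fin m) := Finset.univ.filter (fun j => ⟪c j, u⟫ < 0) with hJdef
        obtain ⟨j₀, hj₀⟩ := hJ
        have hJne : J.Nonempty := ⟨j₀, by simp [hJdef, hj₀]⟩
        have hmemJ : ∀ j, j ∈ J ↔ ⟪c j, u⟫ < 0 := by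
          intro j; simp [hJdef]
        -- auxiliary families and induction hypotheses
        have IH1 : ∀ j : Fin m, ⟪c j, u⟫ < 0 →
            ∃ θ : ℝ, 0 < θ ∧ ∀ x, (∀ i : Fin (m+1), ⟪Fin.snoc (α := fun _ => E) c (-(c j)) i, x⟫ ≤ 0) →
              Metric.infDist x
                {y : E | (∀ i : Fin (m+1), ⟪Fin.snoc (α := fun _ => E) c (-(c j)) i, y⟫ ≤ 0) ∧ A y = 0} ≤ θ * ‖A x‖ := by
          intro j hj
          apply ih (m + 1) (Fin.snoc (α := fun _ => E) c (-(c j))) A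
          have hmemj : ∀ x : E, (∀ i : Fin (m+1), ⟪Fin.snoc (α := fun _ => E) c (-(c j)) i, x⟫ ≤ 0) ↔
              ((∀ i, ⟪c i, x⟫ ≤ 0) ∧ ⟪c j, x⟫ = 0) := by
            intro x
            constructor
            · intro h
              have h1 : ∀ i : Fin m, ⟪c i, x⟫ ≤ 0 := fun i => by
                simpa [Fin.snoc_castSucc] using h i.castSucc
              have h2 := h (Fin.last m)
              rw [Fin.snoc_last, inner_neg_left] at h2
              exact ⟨h1, le_antisymm (h1 j) (by linarith)⟩
            · intro ⟨h1, h2⟩ i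
              induction i using Fin.lastCases with
              | last => rw [Fin.snoc_last, inner_neg_left, h2]; simp
              | cast i => rw [Fin.snoc_castSucc]; exact h1 i
          have hsub : {x : E | ∀ i : Fin (m+1), ⟪Fin.snoc (α := fun _ => E) c (-(c j)) i, x⟫ ≤ 0}
              ⊆ {x : E | ∀ i, ⟪c i, x⟫ ≤ 0} := fun x hx => ((hmemj x).1 hx).1
          have hunotin : u ∉ span ℝ {x : E | ∀ i : Fin (m+1), ⟪Fin.snoc (α := fun _ => E) c (-(c j)) i, x⟫ ≤ 0} := by
            intro hmem
            have hle : span ℝ {x : E | ∀ i : Fin (m+1), ⟪Fin.snoc (α := fun _ => E) c (-(c j)) i, x⟫ ≤ 0} ≤ (ℝ ∙ (c j))ᗮ := by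
              rw [Submodule.span_le]
              intro x hx
              exact Submodule.mem_orthogonal_singleton_iff_inner_right.2 ((hmemj x).1 hx).2
            have := Submodule.mem_orthogonal_singleton_iff_inner_right.1 (hle hmem)
            rw [this] at hj; norm_num at hj
          have hlt : span ℝ {x : E | ∀ i : Fin (m+1), ⟪Fin.snoc (α := fun _ => E) c (-(c j)) i, x⟫ ≤ 0}
              < span ℝ {x : E | ∀ i, ⟪c i, x⟫ ≤ 0} :=
            lt_of_le_of_ne (Submodule.span_mono hsub)
              (fun h => hunotin (h ▸ subset_span huK))
          have := Submodule.finrank_lt_finrank_of_lt hlt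
          omega
        choose! θf hθfpos hθf using IH1
        set Θ : ℝ := J.sup' hJne θf with hΘdef
        have hΘpos : 0 < Θ := by
          obtain ⟨j₀', hj₀'⟩ := hJne
          exact lt_of_lt_of_le (hθfpos j₀' ((hmemJ j₀').1 hj₀')) (Finset.le_sup' θf hj₀')
        refine ⟨Θ, hΘpos, fun x hx => ?_⟩
        set t : ℝ := J.inf' hJne (fun i => ⟪c i, x⟫ / ⟪c i, u⟫) with htdef
        have ht0 : 0 ≤ t := by
          apply Finset.le_inf'
          intro i hi
          have hiu := (hmemJ i).1 hi
          exact div_nonneg_iff.2 (Or.inr ⟨hx i, hiu.le⟩)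
        obtain ⟨j, hjJ, hjt⟩ := Finset.exists_mem_eq_inf' hJne (fun i => ⟪c i, x⟫ / ⟪c i, u⟫)
        have hju : ⟪c j, u⟫ < 0 := (hmemJ j).1 hjJ
        set y : E := x - t • u with hy
        have hcy : ∀ i : Fin m, ⟪c i, y⟫ = ⟪c i, x⟫ - t * ⟪c i, u⟫ := by
          intro i; rw [hy, inner_sub_right, inner_smul_right]
        have hyK : ∀ i : Fin m, ⟪c i, y⟫ ≤ 0 := by
          intro i
          rcases lt_or_eq_of_le (huK i) with hiu | hiu
          · have hiJ : i ∈ J := (hmemJ i).2 hiu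
            have hle : t ≤ ⟪c i, x⟫ / ⟪c i, u⟫ := Finset.inf'_le _ hiJ
            have := mul_le_mul_of_nonpos_right hle hiu.le
            rw [div_mul_cancel₀ _ hiu.ne] at this
            rw [hcy i]; linarith
          · rw [hcy i, hiu, mul_zero, sub_zero]; exact hx i
        have hjy : ⟪c j, y⟫ = 0 := by
          rw [hcy j, htdef, hjt, div_mul_cancel₀ _ hju.ne, sub_self]
        have hyKj : ∀ i : Fin (m+1), ⟪Fin.snoc (α := fun _ => E) c (-(c j)) i, y⟫ ≤ 0 := by
          intro i
          induction i using Fin.lastCases with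
          | last => rw [Fin.snoc_last, inner_neg_left, hjy]; simp
          | cast i => rw [Fin.snoc_castSucc]; exact hyK i
        have hAy : A y = A x := by
          rw [hy, map_sub, map_smul, huA, smul_zero, sub_zero]
        have hSjne : ({y : E | (∀ i : Fin (m+1), ⟪Fin.snoc (α := fun _ => E) c (-(c j)) i, y⟫ ≤ 0) ∧ A y = 0}).Nonempty :=
          ⟨0, fun i => by simp, map_zero A⟩
        have hstep : Metric.infDist x {y : E | (∀ i, ⟪c i, y⟫ ≤ 0) ∧ A y = 0}
            ≤ Metric.infDist y {y : E | (∀ i : Fin (m+1), ⟪Fin.snoc (α := fun _ => E) c (-(c j)) i, y⟫ ≤ 0) ∧ A y = 0} := by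
          refine le_infDist_of hSjne fun s hs => ?_
          have hs1 : ∀ i : Fin m, ⟪c i, s⟫ ≤ 0 := fun i => by
            simpa [Fin.snoc_castSucc] using hs.1 i.castSucc
          have hsS : s + t • u ∈ {y : E | (∀ i, ⟪c i, y⟫ ≤ 0) ∧ A y = 0} := by
            refine ⟨fun i => ?_, ?_⟩
            · rw [inner_add_right, inner_smul_right]
              exact add_nonpos (hs1 i) (mul_nonpos_of_nonneg_of_nonpos ht0 (huK i))
            · rw [map_add, map_smul, huA, smul_zero, add_zero, hs.2]
          calc Metric.infDist x {y : E | (∀ i, ⟪c i, y⟫ ≤ 0) ∧ A y = 0}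
              ≤ dist x (s + t • u) := Metric.infDist_le_dist_of_mem hsS
            _ = dist y s := by
                rw [dist_eq_norm, dist_eq_norm, hy]
                congr 1
                abel
        calc Metric.infDist x {y : E | (∀ i, ⟪c i, y⟫ ≤ 0) ∧ A y = 0}
            ≤ Metric.infDist y {y : E | (∀ i : Fin (m+1), ⟪Fin.snoc (α := fun _ => E) c (-(c j)) i, y⟫ ≤ 0) ∧ A y = 0} :=
              hstep
          _ ≤ θf j * ‖A y‖ := hθf j hju y hyKj
          _ = θf j * ‖A x‖ := by rw [hAy]
          _ ≤ Θ * ‖A x‖ :=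
              mul_le_mul_of_nonneg_right (Finset.le_sup' θf hjJ) (norm_nonneg (A x))
      · -- case B2 : ⟪c i, u⟫ = 0 for all i; reduce to the cone intersected with u^⊥
        push_neg at hJ
        have hcu : ∀ i, ⟪c i, u⟫ = 0 := fun i => le_antisymm (huK i) (hJ i)
        set c' : Fin (m + 2) → E := Fin.snoc (Fin.snoc c u) (-u) with hc'
        have hc'cast : ∀ i : Fin m, c' (i.castSucc.castSucc) = c i := by
          intro i; simp [hc', Fin.snoc_castSucc]
        have hc'u : c' ((Fin.last m).castSucc) = u := by
          simp [hc', Fin.snoc_castSucc, Fin.snoc_last]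
        have hc'nu : c' (Fin.last (m + 1)) = -u := by
          simp [hc', Fin.snoc_last]
        have hmem' : ∀ x : E, (∀ i, ⟪c' i, x⟫ ≤ 0) ↔ ((∀ i, ⟪c i, x⟫ ≤ 0) ∧ ⟪u, x⟫ = 0) := by
          intro x
          constructor
          · intro h
            refine ⟨fun i => by simpa [hc'cast i] using h (i.castSucc.castSucc), ?_⟩
            have h1 := h ((Fin.last m).castSucc)
            have h2 := h (Fin.last (m + 1))
            rw [hc'u] at h1
            rw [hc'nu, inner_neg_left] at h2
            linarith
          · intro ⟨h1, h2⟩ i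
            induction i using Fin.lastCases with
            | last => rw [hc'nu, inner_neg_left, h2]; simp
            | cast i =>
              induction i using Fin.lastCases with
              | last => rw [hc'u, h2]
              | cast i => rw [hc'cast i]; exact h1 i
        have huu : ⟪u, u⟫ = (1:ℝ) := by
          rw [real_inner_self_eq_norm_mul_norm, hu1]; norm_num
        -- rank decreases
        have hK'sub : {x : E | ∀ i, ⟪c' i, x⟫ ≤ 0} ⊆ {x : E | ∀ i, ⟪c i, x⟫ ≤ 0} :=
          fun x hx => ((hmem' x).1 hx).1
        have huspan : u ∈ span ℝ {x : E | ∀ i, ⟪c i, x⟫ ≤ 0} := subset_span huK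
        have hunotin : u ∉ span ℝ {x : E | ∀ i, ⟪c' i, x⟫ ≤ 0} := by
          intro hmem
          have hle : span ℝ {x : E | ∀ i, ⟪c' i, x⟫ ≤ 0} ≤ (ℝ ∙ u)ᗮ := by
            rw [Submodule.span_le]
            intro x hx
            exact Submodule.mem_orthogonal_singleton_iff_inner_right.2 ((hmem' x).1 hx).2
          have := Submodule.mem_orthogonal_singleton_iff_inner_right.1 (hle hmem)
          rw [huu] at this; norm_num at this
        have hlt : span ℝ {x : E | ∀ i, ⟪c' i, x⟫ ≤ 0}
            < span ℝ {x : E | ∀ i, ⟪c i, x⟫ ≤ 0} :=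
          lt_of_le_of_ne (Submodule.span_mono hK'sub) (fun h => hunotin (h ▸ huspan))
        have hrank' : finrank ℝ (span ℝ {x : E | ∀ i, ⟪c' i, x⟫ ≤ 0}) ≤ d := by
          have := Submodule.finrank_lt_finrank_of_lt hlt
          omega
        obtain ⟨θ, hθpos, hθ⟩ := ih (m + 2) c' A hrank'
        refine ⟨θ, hθpos, fun x hx => ?_⟩
        set t : ℝ := ⟪u, x⟫ with hts
        set y : E := x - t • u with hy
        have hyK' : ∀ i, ⟪c' i, y⟫ ≤ 0 := by
          rw [hmem']
          refine ⟨fun i => ?_, ?_⟩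
          · rw [hy, inner_sub_right, inner_smul_right, hcu i, mul_zero, sub_zero]
            exact hx i
          · rw [hy, inner_sub_right, inner_smul_right, huu, mul_one, sub_self]
        have hAy : A y = A x := by
          rw [hy, map_sub, map_smul, huA, smul_zero, sub_zero]
        have hS'ne : ({y : E | (∀ i, ⟪c' i, y⟫ ≤ 0) ∧ A y = 0}).Nonempty :=
          ⟨0, fun i => by simp, map_zero A⟩
        have hstep : Metric.infDist x {y : E | (∀ i, ⟪c i, y⟫ ≤ 0) ∧ A y = 0}
            ≤ Metric.infDist y {y : E | (∀ i, ⟪c' i, y⟫ ≤ 0) ∧ A y = 0} := by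
          refine le_infDist_of hS'ne fun s hs => ?_
          have hsS : s + t • u ∈ {y : E | (∀ i, ⟪c i, y⟫ ≤ 0) ∧ A y = 0} := by
            obtain ⟨hs1, hs2⟩ := (hmem' s).1 hs.1
            refine ⟨fun i => ?_, ?_⟩
            · rw [inner_add_right, inner_smul_right, hcu i, mul_zero, add_zero]
              exact hs1 i
            · rw [map_add, map_smul, huA, smul_zero, add_zero, hs.2]
          calc Metric.infDist x {y : E | (∀ i, ⟪c i, y⟫ ≤ 0) ∧ A y = 0}
              ≤ dist x (s + t • u) := Metric.infDist_le_dist_of_mem hsS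
            _ = dist y s := by
                rw [dist_eq_norm, dist_eq_norm, hy]
                congr 1
                abel
        calc Metric.infDist x {y : E | (∀ i, ⟪c i, y⟫ ≤ 0) ∧ A y = 0}
            ≤ Metric.infDist y {y : E | (∀ i, ⟪c' i, y⟫ ≤ 0) ∧ A y = 0} := hstep
          _ ≤ θ * ‖A y‖ := hθ y hyK'
          _ = θ * ‖A x‖ := by rw [hAy]
    · -- case A : the only solution of the homogeneous system in the cone is 0
      have h0 : (0:E) ∈ {y : E | (∀ i, ⟪c i, y⟫ ≤ 0) ∧ A y = 0} :=
        ⟨fun i => by simp, map_zero A⟩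
      have hS0 : {y : E | (∀ i, ⟪c i, y⟫ ≤ 0) ∧ A y = 0} = {0} := by
        refine Set.eq_singleton_iff_unique_mem.2 ⟨h0, fun y hy => ?_⟩
        by_contra hne
        refine hu ⟨‖y‖⁻¹ • y, fun i => ?_, ?_, ?_⟩
        · rw [inner_smul_right]
          exact mul_nonpos_of_nonneg_of_nonpos (inv_nonneg.2 (norm_nonneg y)) (hy.1 i)
        · rw [map_smul, hy.2, smul_zero]
        · rw [norm_smul, norm_inv, norm_norm, inv_mul_cancel₀ (norm_ne_zero_iff.2 hne)]
      -- scaling + compactness argument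
      by_cases hT : ({x : E | (∀ i, ⟪c i, x⟫ ≤ 0) ∧ ‖x‖ = 1}).Nonempty
      · have hKclosed : IsClosed {x : E | ∀ i, ⟪c i, x⟫ ≤ 0} := by
          have : {x : E | ∀ i, ⟪c i, x⟫ ≤ 0} = ⋂ i, {x : E | ⟪c i, x⟫ ≤ 0} := by
            ext x; simp
          rw [this]
          exact isClosed_iInter fun i =>
            isClosed_le (Continuous.inner continuous_const continuous_id) continuous_const
        have hTclosed : IsClosed {x : E | (∀ i, ⟪c i, x⟫ ≤ 0) ∧ ‖x‖ = 1} := by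
          have : {x : E | (∀ i, ⟪c i, x⟫ ≤ 0) ∧ ‖x‖ = 1}
              = {x : E | ∀ i, ⟪c i, x⟫ ≤ 0} ∩ {x : E | ‖x‖ = 1} := rfl
          rw [this]
          exact hKclosed.inter (isClosed_eq continuous_norm continuous_const)
        have hTbdd : Bornology.IsBounded {x : E | (∀ i, ⟪c i, x⟫ ≤ 0) ∧ ‖x‖ = 1} := by
          refine (Metric.isBounded_closedBall (x := (0:E)) (r := 1)).subset fun x hx => ?_
          simp [Metric.mem_closedBall, dist_zero_right, hx.2]
        have hTcompact := Metric.isCompact_of_isClosed_isBounded hTclosed hTbdd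
        obtain ⟨x₀, hx₀T, hx₀min⟩ := hTcompact.exists_isMinOn hT
          ((A.continuous_of_finiteDimensional.norm).continuousOn)
        have hμpos : 0 < ‖A x₀‖ := by
          rcases (norm_nonneg (A x₀)).lt_or_eq with h | h
          · exact h
          · exfalso
            have : A x₀ = 0 := norm_eq_zero.1 h.symm
            have : x₀ ∈ ({0} : Set E) := hS0 ▸ (⟨hx₀T.1, this⟩ :
              x₀ ∈ {y : E | (∀ i, ⟪c i, y⟫ ≤ 0) ∧ A y = 0})
            simp only [Set.mem_singleton_iff] at this
            rw [this] at hx₀T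
            simpa using hx₀T.2
        refine ⟨‖A x₀‖⁻¹, inv_pos.2 hμpos, fun x hx => ?_⟩
        rw [hS0, Metric.infDist_singleton, dist_zero_right]
        by_cases hx0 : x = 0
        · simp [hx0]
        · have hw : ‖x‖⁻¹ • x ∈ {x : E | (∀ i, ⟪c i, x⟫ ≤ 0) ∧ ‖x‖ = 1} := by
            refine ⟨fun i => ?_, ?_⟩
            · rw [inner_smul_right]
              exact mul_nonpos_of_nonneg_of_nonpos (inv_nonneg.2 (norm_nonneg x)) (hx i)
            · rw [norm_smul, norm_inv, norm_norm, inv_mul_cancel₀ (norm_ne_zero_iff.2 hx0)]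
          have hmin : ‖A x₀‖ ≤ ‖A (‖x‖⁻¹ • x)‖ := hx₀min hw
          have heq : ‖A (‖x‖⁻¹ • x)‖ = ‖x‖⁻¹ * ‖A x‖ := by
            rw [map_smul, norm_smul, norm_inv, norm_norm]
          rw [heq] at hmin
          have hxpos : 0 < ‖x‖ := norm_pos_iff.2 hx0
          have hkey : ‖x‖ * ‖A x₀‖ ≤ ‖A x‖ := by
            have h2 := mul_le_mul_of_nonneg_left hmin hxpos.le
            rwa [mul_inv_cancel_left₀ hxpos.ne'] at h2
          calc ‖x‖ ≤ ‖A x‖ / ‖A x₀‖ := by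
                rw [le_div_iff₀ hμpos]; exact hkey
            _ = ‖A x₀‖⁻¹ * ‖A x‖ := by rw [div_eq_inv_mul]
      · -- the cone is {0}
        refine ⟨1, one_pos, fun x hx => ?_⟩
        have hx0 : x = 0 := by
          by_contra hne
          exact hT ⟨‖x‖⁻¹ • x, fun i => by
            rw [inner_smul_right]
            exact mul_nonpos_of_nonneg_of_nonpos (inv_nonneg.2 (norm_nonneg x)) (hx i),
            by rw [norm_smul, norm_inv, norm_norm, inv_mul_cancel₀ (norm_ne_zero_iff.2 hne)]⟩
        subst hx0
        simp [Metric.infDist_zero_of_mem h0]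

private lemma coneHoffman (m : ℕ) (c : Fin m → E) (A : E →ₗ[ℝ] F) :
    ∃ θ : ℝ, 0 < θ ∧ ∀ x, (∀ i, ⟪c i, x⟫ ≤ 0) →
      Metric.infDist x {y : E | (∀ i, ⟪c i, y⟫ ≤ 0) ∧ A y = 0} ≤ θ * ‖A x‖ :=
  coneHoffman_aux _ m c A le_rfl

private lemma prod_comp_le (q : WithLp 2 (E × ℝ)) : ‖q.fst‖ ≤ ‖q‖ ∧ |q.snd| ≤ ‖q‖ := by
  have h := WithLp.prod_norm_sq_eq_of_L2 q
  constructor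
  · nlinarith [norm_nonneg q, norm_nonneg q.fst, norm_nonneg q.snd, sq_nonneg ‖q.snd‖]
  · have : ‖q.snd‖ ≤ ‖q‖ := by nlinarith [norm_nonneg q, norm_nonneg q.fst, norm_nonneg q.snd]
    simpa using this

set_option maxHeartbeats 1000000 in
/-- Hoffman-type error bound for a bounded polyhedron intersected with an affine set. -/
private lemma hoffman (m : ℕ) (c : Fin m → E) (d : Fin m → ℝ) (Ab : E →ₗ[ℝ] F) (b : F)
    (R : ℝ) (hR : ∀ x, (∀ i, ⟪c i, x⟫ ≤ d i) → ‖x‖ ≤ R)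
    (xbar : E) (hxbar : ∀ i, ⟪c i, xbar⟫ ≤ d i) (hxbarA : Ab xbar = b) :
    ∃ θ : ℝ, 0 < θ ∧ ∀ x, (∀ i, ⟪c i, x⟫ ≤ d i) →
      ∃ x', (∀ i, ⟪c i, x'⟫ ≤ d i) ∧ Ab x' = b ∧ ‖x - x'‖ ≤ θ * ‖Ab x - b‖ := by
  have hR0 : 0 ≤ R := le_trans (norm_nonneg xbar) (hR xbar hxbar)
  set e := WithLp.equiv 2 (E × ℝ) with he
  set c' : Fin (m + 1) → WithLp 2 (E × ℝ) :=
    Fin.snoc (α := fun _ => WithLp 2 (E × ℝ)) (fun i => e.symm (c i, -(d i)))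
      (e.symm (0, -1)) with hc'
  set Ah : WithLp 2 (E × ℝ) →ₗ[ℝ] F :=
    (Ab.comp ((LinearMap.fst ℝ E ℝ).comp (WithLp.linearEquiv 2 ℝ (E × ℝ)).toLinearMap)) -
      ((LinearMap.snd ℝ E ℝ).comp (WithLp.linearEquiv 2 ℝ (E × ℝ)).toLinearMap).smulRight b
    with hAh
  have hAhapp : ∀ p : WithLp 2 (E × ℝ), Ah p = Ab p.fst - p.snd • b := fun p => rfl
  have hinner : ∀ (a : E) (s : ℝ) (p : WithLp 2 (E × ℝ)),
      (inner ℝ (e.symm (a, s)) p : ℝ) = ⟪a, p.fst⟫ + s * p.snd := by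
    intro a s p
    rw [WithLp.prod_inner_apply]
    simp [he, RCLike.inner_apply, mul_comm]
  have hmem : ∀ p : WithLp 2 (E × ℝ), (∀ i, ⟪c' i, p⟫ ≤ 0) ↔
      ((∀ i, ⟪c i, p.fst⟫ ≤ d i * p.snd) ∧ 0 ≤ p.snd) := by
    intro p
    constructor
    · intro h
      constructor
      · intro i
        have := h i.castSucc
        rw [hc', Fin.snoc_castSucc, hinner] at this
        linarith
      · have := h (Fin.last m)
        rw [hc', Fin.snoc_last, hinner, inner_zero_left] at this
        linarith
    · intro ⟨h1, h2⟩ i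
      induction i using Fin.lastCases with
      | last =>
        rw [hc', Fin.snoc_last, hinner, inner_zero_left]
        linarith
      | cast i =>
        rw [hc', Fin.snoc_castSucc, hinner]
        have := h1 i
        linarith
  obtain ⟨θ, hθpos, hθ⟩ := coneHoffman (m + 1) c' Ah
  have hS'ne : ({q : WithLp 2 (E × ℝ) | (∀ i, ⟪c' i, q⟫ ≤ 0) ∧ Ah q = 0}).Nonempty := by
    refine ⟨0, ?_, map_zero Ah⟩
    intro i; simp
  set Θ : ℝ := 2 * θ * (1 + R) + 8 * R * θ + 1 with hΘ
  have hΘpos : 0 < Θ := by positivity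
  refine ⟨Θ, hΘpos, fun x hx => ?_⟩
  by_cases hr : Ab x = b
  · exact ⟨x, hx, hr, by rw [sub_self, norm_zero]; positivity⟩
  have hrpos : 0 < ‖Ab x - b‖ := by
    rw [norm_pos_iff, sub_ne_zero]; exact hr
  set p : WithLp 2 (E × ℝ) := e.symm (x, 1) with hp
  have hp1 : p.fst = x := rfl
  have hp2 : p.snd = 1 := rfl
  have hpK' : ∀ i, ⟪c' i, p⟫ ≤ 0 := by
    rw [hmem]
    refine ⟨fun i => ?_, ?_⟩
    · rw [hp1, hp2, mul_one]; exact hx i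
    · rw [hp2]; norm_num
  have hApnorm : ‖Ah p‖ = ‖Ab x - b‖ := by
    rw [hAhapp, hp1, hp2, one_smul]
  have hlt : Metric.infDist p {q : WithLp 2 (E × ℝ) | (∀ i, ⟪c' i, q⟫ ≤ 0) ∧ Ah q = 0}
      < 2 * θ * ‖Ab x - b‖ := by
    calc Metric.infDist p {q : WithLp 2 (E × ℝ) | (∀ i, ⟪c' i, q⟫ ≤ 0) ∧ Ah q = 0}
        ≤ θ * ‖Ah p‖ := hθ p hpK'
      _ = θ * ‖Ab x - b‖ := by rw [hApnorm]
      _ < 2 * θ * ‖Ab x - b‖ := by nlinarith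
  obtain ⟨s, hsS', hds⟩ := (Metric.infDist_lt_iff hS'ne).1 hlt
  obtain ⟨hsc', hsA'⟩ := hsS'
  obtain ⟨hsc, hτ0⟩ := (hmem s).1 hsc'
  set y : E := s.fst with hys
  set τ : ℝ := s.snd with hτs
  have hsA : Ab y = τ • b := by
    have := hsA'
    rw [hAhapp] at this
    rw [sub_eq_zero] at this
    exact this
  have hcomp := prod_comp_le (p - s)
  have hps1 : (p - s).fst = x - y := rfl
  have hps2 : (p - s).snd = 1 - τ := rfl
  rw [hps1, hps2] at hcomp
  have hdist : dist p s = ‖p - s‖ := dist_eq_norm p s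
  have h1 : ‖x - y‖ < 2 * θ * ‖Ab x - b‖ := lt_of_le_of_lt (hdist ▸ hcomp.1) hds
  have h2 : |1 - τ| < 2 * θ * ‖Ab x - b‖ := lt_of_le_of_lt (hdist ▸ hcomp.2) hds
  by_cases hsmall : 2 * θ * ‖Ab x - b‖ ≤ 1 / 2
  · have hτhalf : 1 / 2 < τ := by
      have := abs_lt.1 (lt_of_lt_of_le h2 hsmall)
      linarith [this.1, this.2]
    have hτpos : 0 < τ := by linarith
    set x' : E := τ⁻¹ • y with hx'
    have hx'X : ∀ i, ⟪c i, x'⟫ ≤ d i := by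
      intro i
      rw [hx', inner_smul_right]
      have := mul_le_mul_of_nonneg_left (hsc i) (inv_nonneg.2 hτpos.le)
      calc τ⁻¹ * ⟪c i, y⟫ ≤ τ⁻¹ * (d i * τ) := this
        _ = d i := by field_simp
    have hA' : Ab x' = b := by
      rw [hx', map_smul, hsA, smul_smul, inv_mul_cancel₀ hτpos.ne', one_smul]
    refine ⟨x', hx'X, hA', ?_⟩
    have hyx' : y = τ • x' := by
      rw [hx', smul_smul, mul_inv_cancel₀ hτpos.ne', one_smul]
    have hnx' : ‖x'‖ ≤ R := hR x' hx'X
    have hyx'norm : ‖y - x'‖ ≤ |1 - τ| * R := by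
      calc ‖y - x'‖ = ‖(τ - 1) • x'‖ := by
            rw [hyx', show τ • x' - x' = (τ - 1) • x' by rw [sub_smul, one_smul]]
        _ = |τ - 1| * ‖x'‖ := by rw [norm_smul, Real.norm_eq_abs]
        _ ≤ |1 - τ| * R := by
            rw [abs_sub_comm]
            exact mul_le_mul_of_nonneg_left hnx' (abs_nonneg _)
    calc ‖x - x'‖ ≤ ‖x - y‖ + ‖y - x'‖ := by
          have := norm_add_le (x - y) (y - x')
          simpa using this
      _ ≤ 2 * θ * ‖Ab x - b‖ + |1 - τ| * R := by linarith
      _ ≤ 2 * θ * ‖Ab x - b‖ + 2 * θ * ‖Ab x - b‖ * R := by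
          have := mul_le_mul_of_nonneg_right h2.le hR0
          linarith
      _ = 2 * θ * (1 + R) * ‖Ab x - b‖ := by ring
      _ ≤ Θ * ‖Ab x - b‖ := by
          apply mul_le_mul_of_nonneg_right _ hrpos.le
          rw [hΘ]; nlinarith
  · rw [not_le] at hsmall
    refine ⟨xbar, hxbar, hxbarA, ?_⟩
    have hxR : ‖x‖ ≤ R := hR x hx
    have hxbarR : ‖xbar‖ ≤ R := hR xbar hxbar
    have hxx : ‖x - xbar‖ ≤ 2 * R := by
      calc ‖x - xbar‖ ≤ ‖x‖ + ‖xbar‖ := norm_sub_le x xbar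
        _ ≤ 2 * R := by linarith
    calc ‖x - xbar‖ ≤ 2 * R := hxx
      _ ≤ 8 * R * θ * ‖Ab x - b‖ := by nlinarith
      _ ≤ Θ * ‖Ab x - b‖ := by
          apply mul_le_mul_of_nonneg_right _ hrpos.le
          rw [hΘ]; nlinarith

end ConeHoffman

open Matrix

/-- Claim 1 of the paper: on a bounded polyhedron `X` meeting the
affine set `{Ax = b}`, the regularity condition
`v‖Ax − b‖ ≤ dist(0, Aᵀ(Ax − b) + N_X(x))` holds uniformly for some `v > 0`. -/
theorem polyhedral_regularity
    (n l m : ℕ) (hn : 0 < n) (hl : 0 < l) (hm : 0 < m)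
    (A : Matrix (Fin l) (Fin n) ℝ) (b : EuclideanSpace ℝ (Fin l))
    (c : Fin m → EuclideanSpace ℝ (Fin n)) (d : Fin m → ℝ)
    (X : Set (EuclideanSpace ℝ (Fin n)))
    (hX : X = {x : EuclideanSpace ℝ (Fin n) | ∀ i : Fin m, (inner ℝ (c i) x : ℝ) ≤ d i})
    (hbdd : Bornology.IsBounded X)
    (hfeas : (X ∩ {x : EuclideanSpace ℝ (Fin n) | Matrix.toEuclideanLin A x = b}).Nonempty) :
    ∃ v : ℝ, 0 < v ∧ ∀ x ∈ X,
      v * ‖Matrix.toEuclideanLin A x - b‖ ≤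
        Metric.infDist 0
          {w : EuclideanSpace ℝ (Fin n) | ∃ z : EuclideanSpace ℝ (Fin n),
            (∀ x' ∈ X, (inner ℝ z (x - x') : ℝ) ≥ 0) ∧
            w = Matrix.toEuclideanLin Aᵀ (Matrix.toEuclideanLin A x - b) + z} := by
  obtain ⟨xbar, hxbarX, hxbarA⟩ := hfeas
  obtain ⟨R, hRX⟩ := hbdd.subset_closedBall 0
  have hR : ∀ x : EuclideanSpace ℝ (Fin n), (∀ i, (inner ℝ (c i) x : ℝ) ≤ d i) → ‖x‖ ≤ R := by
    intro x hx
    have hxX : x ∈ X := by rw [hX]; exact hx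
    have := hRX hxX
    simpa [Metric.mem_closedBall, dist_zero_right] using this
  have hxbar' : ∀ i, (inner ℝ (c i) xbar : ℝ) ≤ d i := by rw [hX] at hxbarX; exact hxbarX
  obtain ⟨θ, hθpos, hθ⟩ := hoffman m c d (Matrix.toEuclideanLin A) b R hR xbar hxbar' hxbarA
  refine ⟨θ⁻¹, inv_pos.2 hθpos, fun x hxX => ?_⟩
  set r : EuclideanSpace ℝ (Fin l) := Matrix.toEuclideanLin A x - b with hr
  have hSne : ({w : EuclideanSpace ℝ (Fin n) | ∃ z : EuclideanSpace ℝ (Fin n),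
      (∀ x' ∈ X, (inner ℝ z (x - x') : ℝ) ≥ 0) ∧
      w = Matrix.toEuclideanLin Aᵀ (Matrix.toEuclideanLin A x - b) + z}).Nonempty :=
    ⟨Matrix.toEuclideanLin Aᵀ (Matrix.toEuclideanLin A x - b),
      0, fun x' _ => by simp, (add_zero _).symm⟩
  apply le_infDist_of hSne
  intro w hw
  obtain ⟨z, hz, rfl⟩ := hw
  rw [dist_zero_left]
  by_cases hr0 : Matrix.toEuclideanLin A x = b
  · have : r = 0 := by rw [hr, hr0, sub_self]
    rw [← hr, this, norm_zero, mul_zero]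
    exact norm_nonneg _
  · have hx' : ∀ i, (inner ℝ (c i) x : ℝ) ≤ d i := by rw [hX] at hxX; exact hxX
    obtain ⟨x', hx'c, hx'A, hdist⟩ := hθ x hx'
    have hx'X : x' ∈ X := by rw [hX]; exact hx'c
    have hrpos : 0 < ‖r‖ := by rw [hr, norm_pos_iff, sub_ne_zero]; exact hr0
    have hzpos : (0:ℝ) ≤ inner ℝ z (x - x') := hz x' hx'X
    have hadj : (inner ℝ (Matrix.toEuclideanLin Aᵀ r) (x - x') : ℝ)
        = inner ℝ r (Matrix.toEuclideanLin A (x - x')) := by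
      rw [← Matrix.conjTranspose_eq_transpose_of_trivial,
        Matrix.toEuclideanLin_conjTranspose_eq_adjoint, LinearMap.adjoint_inner_left]
    have hAxx : Matrix.toEuclideanLin A (x - x') = r := by
      rw [map_sub, hx'A, hr]
    have hkey : ‖r‖ ^ 2 ≤ (inner ℝ (Matrix.toEuclideanLin Aᵀ r + z) (x - x') : ℝ) := by
      rw [inner_add_left, hadj, hAxx, real_inner_self_eq_norm_sq]
      linarith
    set w : EuclideanSpace ℝ (Fin n) := Matrix.toEuclideanLin Aᵀ r + z with hwdef
    have hCS : (inner ℝ w (x - x') : ℝ) ≤ ‖w‖ * ‖x - x'‖ := real_inner_le_norm _ _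
    have h2 : ‖r‖ ^ 2 ≤ ‖w‖ * (θ * ‖r‖) := by
      calc ‖r‖ ^ 2 ≤ (inner ℝ w (x - x') : ℝ) := hkey
        _ ≤ ‖w‖ * ‖x - x'‖ := hCS
        _ ≤ ‖w‖ * (θ * ‖r‖) := by
            apply mul_le_mul_of_nonneg_left _ (norm_nonneg w)
            rw [← hr] at hdist
            exact hdist
    have h4 : ‖r‖ ≤ θ * ‖w‖ := by
      have h3 : ‖r‖ * ‖r‖ ≤ (θ * ‖w‖) * ‖r‖ := by nlinarith
      exact le_of_mul_le_mul_right h3 hrpos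
    calc θ⁻¹ * ‖r‖ ≤ θ⁻¹ * (θ * ‖w‖) :=
          mul_le_mul_of_nonneg_left h4 (inv_pos.2 hθpos).le
      _ = ‖w‖ := by field_simp
end

section
/- Let l, n be positive integers, let A be a real l×n matrix with A Aᵀ equal to the l×l identity matrix, let x̂ ∈ ℝⁿ satisfy ‖x̂‖ < 1, and set b = A x̂. Let x ∈ ℝⁿ satisfy ‖x‖ = 1 and ⟨x, Aᵀ(Ax − b)⟩ ≤ 0. Then the l×l matrix A(I_n − x xᵀ)Aᵀ is positive definite; that is, ⟨y, A(I_n − x xᵀ)Aᵀ y⟩ > 0 for every nonzero y ∈ ℝ^l. -/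
open Matrix

lemma inner_eq_dot' {m : ℕ} (x y : EuclideanSpace ℝ (Fin m)) :
    (inner ℝ x y : ℝ) = (WithLp.equiv 2 (Fin m → ℝ) x) ⬝ᵥ (WithLp.equiv 2 (Fin m → ℝ) y) := by
  simp only [PiLp.inner_apply, RCLike.inner_apply, conj_trivial, dotProduct, WithLp.equiv_apply, mul_comm]

lemma piLp_equiv_toEuclideanLin_apply {m k : ℕ} (M : Matrix (Fin m) (Fin k) ℝ)
    (v : EuclideanSpace ℝ (Fin k)) :
    WithLp.equiv 2 (Fin m → ℝ) (Matrix.toEuclideanLin M v) = M *ᵥ WithLp.equiv 2 (Fin k → ℝ) v :=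
  rfl

lemma WithLp.equiv_sub' {m : ℕ} (v v' : EuclideanSpace ℝ (Fin m)) :
    WithLp.equiv 2 (Fin m → ℝ) (v - v') = WithLp.equiv 2 (Fin m → ℝ) v - WithLp.equiv 2 (Fin m → ℝ) v' :=
  rfl

lemma vecMulVec_mulVec' {m : ℕ} (x w : Fin m → ℝ) :
    (vecMulVec x x) *ᵥ w = (x ⬝ᵥ w) • x := by
  funext i
  simp only [vecMulVec, Matrix.mulVec, dotProduct, Pi.smul_apply, smul_eq_mul, Finset.sum_mul,
    of_apply, Finset.mul_sum]
  exact Finset.sum_congr rfl fun j _ => by ring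

/-- if `A Aᵀ = I`, `b = A x̂` with `‖x̂‖ < 1`, and `x` is a unit vector
with `⟨x, Aᵀ(Ax − b)⟩ ≤ 0`, then `A(I − x xᵀ)Aᵀ` is positive definite. -/
theorem ball_regularity_key_posdef
    (l n : ℕ) (hl : 0 < l) (hn : 0 < n)
    (A : Matrix (Fin l) (Fin n) ℝ) (hA : A * Aᵀ = 1)
    (xhat : EuclideanSpace ℝ (Fin n)) (hxhat : ‖xhat‖ < 1)
    (b : EuclideanSpace ℝ (Fin l)) (hb : b = Matrix.toEuclideanLin A xhat)
    (x : EuclideanSpace ℝ (Fin n)) (hx : ‖x‖ = 1)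
    (hobt : (inner ℝ x (Matrix.toEuclideanLin Aᵀ (Matrix.toEuclideanLin A x - b)) : ℝ) ≤ 0) :
    ∀ y : EuclideanSpace ℝ (Fin l), y ≠ 0 →
      0 < (inner ℝ y (Matrix.toEuclideanLin (A * (1 - Matrix.vecMulVec x x) * Aᵀ) y) : ℝ) := by
  intro y hy
  set xv : Fin n → ℝ := WithLp.equiv 2 (Fin n → ℝ) x with hxv
  set yv : Fin l → ℝ := WithLp.equiv 2 (Fin l → ℝ) y with hyv
  set w : Fin n → ℝ := Aᵀ *ᵥ yv with hw
  set u : EuclideanSpace ℝ (Fin n) := (WithLp.equiv 2 (Fin n → ℝ)).symm w with hu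
  have huw : WithLp.equiv 2 (Fin n → ℝ) u = w := rfl
  have hAw : A *ᵥ w = yv := by
    rw [hw, Matrix.mulVec_mulVec, hA, Matrix.one_mulVec]
  -- the quadratic form equals ⟪u,u⟫ - ⟪x,u⟫^2
  have keyq : (inner ℝ y (Matrix.toEuclideanLin (A * (1 - Matrix.vecMulVec x x) * Aᵀ) y) : ℝ)
      = w ⬝ᵥ w - (xv ⬝ᵥ w) ^ 2 := by
    rw [inner_eq_dot']
    simp only [piLp_equiv_toEuclideanLin_apply]
    rw [← Matrix.mulVec_mulVec, ← Matrix.mulVec_mulVec, Matrix.sub_mulVec, Matrix.one_mulVec,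
      vecMulVec_mulVec', Matrix.dotProduct_mulVec, ← Matrix.mulVec_transpose]
    rw [dotProduct_sub, dotProduct_smul]
    rw [show Aᵀ *ᵥ (WithLp.equiv 2 (Fin l → ℝ)) y = w from rfl]
    rw [show (x ⬝ᵥ w : ℝ) = xv ⬝ᵥ w from rfl,
      show (w ⬝ᵥ x : ℝ) = w ⬝ᵥ xv from rfl, dotProduct_comm w xv, smul_eq_mul]
    ring
  rw [keyq]
  have hww : w ⬝ᵥ w = ‖u‖ ^ 2 := by
    rw [← real_inner_self_eq_norm_sq, inner_eq_dot', huw]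
  have hxw : xv ⬝ᵥ w = (inner ℝ x u : ℝ) := (inner_eq_dot' x u).symm
  have hnu : ‖u‖ = ‖y‖ := by
    have h1 : ‖u‖ ^ 2 = ‖y‖ ^ 2 := by
      rw [← hww, ← real_inner_self_eq_norm_sq, inner_eq_dot']
      rw [hw, Matrix.dotProduct_mulVec, ← Matrix.mulVec_transpose, transpose_transpose, hAw]
    rw [← Real.sqrt_sq (norm_nonneg u), ← Real.sqrt_sq (norm_nonneg y), h1]
  have hu0 : u ≠ 0 := by
    intro h
    apply hy
    rw [← norm_eq_zero, ← hnu, h, norm_zero]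
  have hupos : (0:ℝ) < ‖u‖ := norm_pos_iff.mpr hu0
  -- strict Cauchy-Schwarz
  have hcs : |(inner ℝ x u : ℝ)| < ‖u‖ := by
    rcases lt_or_eq_of_le (abs_real_inner_le_norm x u) with h | h
    · rwa [hx, one_mul] at h
    -- equality case: u = r • x, derive contradiction
    exfalso
    rw [hx, one_mul] at h
    have hcol : ∃ c : ℝ, c ≠ 0 ∧ u = c • x := by
      rcases abs_eq (by positivity : (0:ℝ) ≤ ‖u‖) |>.mp h with h' | h'
      · have := inner_eq_norm_mul_iff_real.mp (by rw [hx, one_mul]; exact h' : (inner ℝ x u : ℝ) = ‖x‖ * ‖u‖)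
        refine ⟨‖u‖, ne_of_gt hupos, ?_⟩
        rw [hx, one_smul] at this
        exact this.symm
      · have h2 : (inner ℝ x (-u) : ℝ) = ‖x‖ * ‖-u‖ := by
          rw [inner_neg_right, hx, one_mul, norm_neg]; linarith
        have := inner_eq_norm_mul_iff_real.mp h2
        rw [hx, norm_neg, one_smul] at this
        refine ⟨-‖u‖, by simp [ne_of_gt hupos], ?_⟩
        rw [neg_smul, this, neg_neg]
    obtain ⟨c, hc, hcx⟩ := hcol
    -- Aᵀ A x = x
    have hwc : w = c • xv := by
      rw [← huw, hcx]; rfl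
    have hAAx : Aᵀ *ᵥ (A *ᵥ xv) = xv := by
      have h3 : Aᵀ *ᵥ (A *ᵥ w) = w := by rw [hAw]
      rw [hwc, Matrix.mulVec_smul, Matrix.mulVec_smul] at h3
      exact smul_right_injective _ hc h3
    -- compute the obtuseness inner product
    have hobt' : (inner ℝ x (Matrix.toEuclideanLin Aᵀ (Matrix.toEuclideanLin A x - b)) : ℝ)
        = 1 - xv ⬝ᵥ (WithLp.equiv 2 (Fin n → ℝ) xhat) := by
      rw [inner_eq_dot', hb]
      simp only [piLp_equiv_toEuclideanLin_apply, WithLp.equiv_sub']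
      rw [Matrix.mulVec_sub, dotProduct_sub]
      rw [show (WithLp.equiv 2 (Fin n → ℝ)) x = xv from rfl]
      have e1 : xv ⬝ᵥ Aᵀ *ᵥ (A *ᵥ xv) = xv ⬝ᵥ xv := by rw [hAAx]
      have e2 : xv ⬝ᵥ xv = 1 := by
        have : (inner ℝ x x : ℝ) = 1 := by
          rw [real_inner_self_eq_norm_sq, hx]; norm_num
        rw [← this, inner_eq_dot']
      have e3 : xv ⬝ᵥ Aᵀ *ᵥ (A *ᵥ (WithLp.equiv 2 (Fin n → ℝ) xhat))
          = xv ⬝ᵥ (WithLp.equiv 2 (Fin n → ℝ) xhat) := by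
        rw [Matrix.dotProduct_mulVec, ← Matrix.mulVec_transpose, transpose_transpose,
          Matrix.dotProduct_mulVec, ← Matrix.mulVec_transpose, hAAx]
      rw [e1, e2, e3]
    rw [hobt'] at hobt
    have hdx : xv ⬝ᵥ (WithLp.equiv 2 (Fin n → ℝ) xhat) = (inner ℝ x xhat : ℝ) :=
      (inner_eq_dot' x xhat).symm
    rw [hdx] at hobt
    have : (inner ℝ x xhat : ℝ) ≤ ‖xhat‖ := by
      calc (inner ℝ x xhat : ℝ) ≤ ‖x‖ * ‖xhat‖ := real_inner_le_norm x xhat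
        _ = ‖xhat‖ := by rw [hx, one_mul]
    linarith
  have : (xv ⬝ᵥ w) ^ 2 < ‖u‖ ^ 2 := by
    rw [hxw, ← sq_abs]
    exact pow_lt_pow_left₀ hcs (abs_nonneg _) (by norm_num)
  rw [hww]
  linarith
end

section
/- Let l, n be positive integers, let A be a real l×n matrix with A Aᵀ equal to the l×l identity matrix, let x̂ ∈ ℝⁿ satisfy ‖x̂‖ < 1, and set b = A x̂. Then there exists v* > 0 such that for every x ∈ ℝⁿ with ‖x‖ = 1 and ⟨x, Aᵀ(Ax − b)⟩ ≤ 0, and every y ∈ ℝ^l, one has ⟨y, A(I_n − x xᵀ)Aᵀ y⟩ ≥ v* ‖y‖². -/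
open Matrix

set_option maxHeartbeats 1000000

section Aux
variable {a b c : Type*} [Fintype a] [Fintype b] [Fintype c]
  [DecidableEq a] [DecidableEq b] [DecidableEq c]

lemma toEuclideanLin_mul_apply (M : Matrix a b ℝ) (N : Matrix b c ℝ)
    (v : EuclideanSpace ℝ c) :
    Matrix.toEuclideanLin (M * N) v = Matrix.toEuclideanLin M (Matrix.toEuclideanLin N v) := by
  simp [Matrix.toEuclideanLin_apply, Matrix.mulVec_mulVec]

lemma toEuclideanLin_one_apply (v : EuclideanSpace ℝ a) :
    Matrix.toEuclideanLin (1 : Matrix a a ℝ) v = v := by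
  simp [Matrix.toEuclideanLin_apply, Matrix.one_mulVec]

lemma toEuclideanLin_vecMulVec_apply (x w : EuclideanSpace ℝ a) :
    Matrix.toEuclideanLin (Matrix.vecMulVec x x) w = (inner ℝ x w : ℝ) • x := by
  apply (WithLp.equiv 2 (a → ℝ)).injective
  ext i
  simp [Matrix.toEuclideanLin_apply, Matrix.mulVec, Matrix.vecMulVec, dotProduct,
    PiLp.inner_apply, Finset.mul_sum, mul_comm, mul_left_comm, mul_assoc]

end Aux

/-- uniform positive lower bound `v* > 0` on the quadratic form
`⟨y, A(I − x xᵀ)Aᵀ y⟩ ≥ v*‖y‖²` over all unit vectors `x` with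
`⟨x, Aᵀ(Ax − b)⟩ ≤ 0`, where `A Aᵀ = I` and `b = A x̂` with `‖x̂‖ < 1`. -/
theorem ball_regularity_uniform_posdef
    (l n : ℕ) (hl : 0 < l) (hn : 0 < n)
    (A : Matrix (Fin l) (Fin n) ℝ) (hA : A * Aᵀ = 1)
    (xhat : EuclideanSpace ℝ (Fin n)) (hxhat : ‖xhat‖ < 1)
    (b : EuclideanSpace ℝ (Fin l)) (hb : b = Matrix.toEuclideanLin A xhat) :
    ∃ vstar : ℝ, 0 < vstar ∧
      ∀ x : EuclideanSpace ℝ (Fin n), ‖x‖ = 1 →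
        (inner ℝ x (Matrix.toEuclideanLin Aᵀ (Matrix.toEuclideanLin A x - b)) : ℝ) ≤ 0 →
        ∀ y : EuclideanSpace ℝ (Fin l),
          (inner ℝ y (Matrix.toEuclideanLin (A * (1 - Matrix.vecMulVec x x) * Aᵀ) y) : ℝ) ≥
            vstar * ‖y‖ ^ 2 := by
  set T := Matrix.toEuclideanLin A with hT
  have hadj : Matrix.toEuclideanLin Aᵀ = LinearMap.adjoint T := by
    rw [← Matrix.conjTranspose_eq_transpose_of_trivial,
      Matrix.toEuclideanLin_conjTranspose_eq_adjoint]
  have hTadj : ∀ u : EuclideanSpace ℝ (Fin l), T (LinearMap.adjoint T u) = u := by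
    intro u
    rw [← hadj, hT, ← toEuclideanLin_mul_apply, hA, toEuclideanLin_one_apply]
  have hadjnorm : ∀ u : EuclideanSpace ℝ (Fin l), ‖LinearMap.adjoint T u‖ = ‖u‖ := by
    intro u
    have h1 : (inner ℝ (LinearMap.adjoint T u) (LinearMap.adjoint T u) : ℝ) = inner ℝ u u := by
      rw [LinearMap.adjoint_inner_right, hTadj]
    rw [real_inner_self_eq_norm_sq, real_inner_self_eq_norm_sq] at h1
    nlinarith [norm_nonneg (LinearMap.adjoint T u), norm_nonneg u]
  -- ‖T z‖ ≤ ‖z‖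
  have hTnorm : ∀ z : EuclideanSpace ℝ (Fin n), ‖T z‖ ≤ ‖z‖ := by
    intro z
    have h1 : ‖T z‖ ^ 2 = (inner ℝ z (LinearMap.adjoint T (T z)) : ℝ) := by
      rw [LinearMap.adjoint_inner_right, real_inner_self_eq_norm_sq]
    have h2 : (inner ℝ z (LinearMap.adjoint T (T z)) : ℝ) ≤ ‖z‖ * ‖T z‖ := by
      calc (inner ℝ z (LinearMap.adjoint T (T z)) : ℝ) ≤ ‖z‖ * ‖LinearMap.adjoint T (T z)‖ :=
        real_inner_le_norm _ _
      _ = ‖z‖ * ‖T z‖ := by rw [hadjnorm]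
    nlinarith [norm_nonneg (T z), norm_nonneg z]
  refine ⟨1 - ‖xhat‖ ^ 2, by nlinarith [norm_nonneg xhat], ?_⟩
  intro x hx hconstraint y
  -- constraint: ‖T x‖ ≤ ‖xhat‖
  have hTx : ‖T x‖ ≤ ‖xhat‖ := by
    have h1 : (inner ℝ x (Matrix.toEuclideanLin Aᵀ (T x - b)) : ℝ)
        = (inner ℝ (T x) (T x - b) : ℝ) := by
      rw [hadj, LinearMap.adjoint_inner_right]
    have h2 : (inner ℝ (T x) (T x) : ℝ) ≤ inner ℝ (T x) b := by
      have := hconstraint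
      rw [h1, inner_sub_right] at this
      linarith
    have h3 : (inner ℝ (T x) b : ℝ) ≤ ‖T x‖ * ‖xhat‖ := by
      calc (inner ℝ (T x) b : ℝ) ≤ ‖T x‖ * ‖b‖ := real_inner_le_norm _ _
      _ ≤ ‖T x‖ * ‖xhat‖ := by
          have : ‖b‖ ≤ ‖xhat‖ := by rw [hb]; exact hTnorm xhat
          exact mul_le_mul_of_nonneg_left this (norm_nonneg _)
    rw [real_inner_self_eq_norm_sq] at h2
    rcases eq_or_lt_of_le (norm_nonneg (T x)) with h | h
    · rw [← h]; exact norm_nonneg xhat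
    · nlinarith
  -- compute the quadratic form
  set w := Matrix.toEuclideanLin Aᵀ y with hw
  have hflip : ∀ (u : EuclideanSpace ℝ (Fin l)) (z : EuclideanSpace ℝ (Fin n)),
      (inner ℝ (Matrix.toEuclideanLin Aᵀ u) z : ℝ) = inner ℝ u (T z) := by
    intro u z
    rw [hadj, LinearMap.adjoint_inner_left]
  have hform : (inner ℝ y (Matrix.toEuclideanLin (A * (1 - Matrix.vecMulVec x x) * Aᵀ) y) : ℝ)
      = ‖y‖ ^ 2 - (inner ℝ x w : ℝ) ^ 2 := by
    rw [toEuclideanLin_mul_apply, toEuclideanLin_mul_apply, ← hw]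
    have hsub : Matrix.toEuclideanLin (1 - Matrix.vecMulVec x x) w
        = w - (inner ℝ x w : ℝ) • x := by
      rw [map_sub, LinearMap.sub_apply, toEuclideanLin_one_apply,
        toEuclideanLin_vecMulVec_apply]
    rw [hsub, map_sub, inner_sub_right, LinearMap.map_smul, inner_smul_right]
    have h1 : (inner ℝ y (T w) : ℝ) = ‖y‖ ^ 2 := by
      rw [hw, hadj, hTadj, real_inner_self_eq_norm_sq]
    have h2 : (inner ℝ y (T x) : ℝ) = inner ℝ x w := by
      rw [real_inner_comm w x, hw, hflip]
    rw [h1, h2]; ring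
  rw [hform]
  have hxw : (inner ℝ x w : ℝ) ^ 2 ≤ ‖xhat‖ ^ 2 * ‖y‖ ^ 2 := by
    have h2 : (inner ℝ x w : ℝ) = inner ℝ y (T x) := by
      rw [hw, real_inner_comm _ x]; exact hflip y x
    have h3 : |(inner ℝ y (T x) : ℝ)| ≤ ‖y‖ * ‖T x‖ := abs_real_inner_le_norm _ _
    have h4 : ‖y‖ * ‖T x‖ ≤ ‖y‖ * ‖xhat‖ :=
      mul_le_mul_of_nonneg_left hTx (norm_nonneg _)
    have h5 := le_trans h3 h4
    have h0 : (0:ℝ) ≤ |(inner ℝ y (T x) : ℝ)| := abs_nonneg _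
    have h6 : (inner ℝ x w : ℝ) ^ 2 = |(inner ℝ y (T x) : ℝ)| ^ 2 := by
      rw [h2, sq_abs]
    rw [h6]
    nlinarith [norm_nonneg y, norm_nonneg xhat]
  nlinarith [norm_nonneg y]
end

section
/- Let l, n be positive integers, let A be a real l×n matrix whose rows are linearly independent (full row rank), let r > 0, let X = {x ∈ ℝⁿ : ‖x‖ ≤ r} be the closed Euclidean ball of radius r, let b ∈ ℝ^l, and suppose there exists x̂ ∈ ℝⁿ with ‖x̂‖ < r and A x̂ = b. Then there exists a constant v > 0 such that for every x ∈ X, v‖Ax − b‖ ≤ dist(0, {Aᵀ(Ax − b) + z : z ∈ N_X(x)}). -/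
open Matrix

/-- Claim 2 of the paper: for a full-row-rank matrix `A`, the
regularity condition `v‖Ax − b‖ ≤ dist(0, Aᵀ(Ax − b) + N_X(x))` holds uniformly
on the closed ball `X` of radius `r` whenever some strictly interior point of the
ball satisfies `A x̂ = b`. -/
theorem ball_regularity
    (l n : ℕ) (hl : 0 < l) (hn : 0 < n)
    (A : Matrix (Fin l) (Fin n) ℝ) (hrank : LinearIndependent ℝ (fun i : Fin l => A i))
    (r : ℝ) (hr : 0 < r)
    (X : Set (EuclideanSpace ℝ (Fin n)))
    (hX : X = {x : EuclideanSpace ℝ (Fin n) | ‖x‖ ≤ r})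
    (b : EuclideanSpace ℝ (Fin l))
    (xhat : EuclideanSpace ℝ (Fin n)) (hxhat : ‖xhat‖ < r)
    (hfeas : Matrix.toEuclideanLin A xhat = b) :
    ∃ v : ℝ, 0 < v ∧ ∀ x ∈ X,
      v * ‖Matrix.toEuclideanLin A x - b‖ ≤
        Metric.infDist 0
          {w : EuclideanSpace ℝ (Fin n) | ∃ z : EuclideanSpace ℝ (Fin n),
            (∀ x' ∈ X, (inner ℝ z (x - x') : ℝ) ≥ 0) ∧
            w = Matrix.toEuclideanLin Aᵀ (Matrix.toEuclideanLin A x - b) + z} := by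
  set ρ : ℝ := r - ‖xhat‖ with hρdef
  have hρ : 0 < ρ := by simp only [hρdef]; linarith
  -- injectivity of Aᵀ as a linear map
  have hinj : LinearMap.ker (Matrix.toEuclideanLin Aᵀ) = ⊥ := by
    rw [LinearMap.ker_eq_bot']
    intro u hu
    have hu' : Aᵀ *ᵥ (WithLp.equiv 2 (Fin l → ℝ) u) = 0 := by
      have := congrArg (WithLp.equiv 2 (Fin n → ℝ)) hu
      simpa using this
    have hz : ∑ i, (WithLp.equiv 2 (Fin l → ℝ) u) i • A i = 0 := by
      funext j
      have := congrFun hu' j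
      simpa [Matrix.mulVec, dotProduct, Matrix.transpose_apply,
        Finset.sum_apply, mul_comm] using this
    have := (Fintype.linearIndependent_iff.mp hrank) _ hz
    ext i
    exact this i
  obtain ⟨K, hK, hKa⟩ := (Matrix.toEuclideanLin Aᵀ).exists_antilipschitzWith hinj
  have hKbound : ∀ u : EuclideanSpace ℝ (Fin l),
      ‖u‖ ≤ (K : ℝ) * ‖Matrix.toEuclideanLin Aᵀ u‖ := by
    intro u
    have := hKa.le_mul_dist u 0
    simpa [dist_eq_norm] using this
  -- adjoint identity
  have hadj : ∀ (u : EuclideanSpace ℝ (Fin l)) (y : EuclideanSpace ℝ (Fin n)),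
      (inner ℝ (Matrix.toEuclideanLin Aᵀ u) y : ℝ) = inner ℝ u (Matrix.toEuclideanLin A y) := by
    intro u y
    rw [← Matrix.conjTranspose_eq_transpose_of_trivial,
      Matrix.toEuclideanLin_conjTranspose_eq_adjoint, LinearMap.adjoint_inner_left]
  refine ⟨ρ / ((K : ℝ) * (ρ + 2 * r)), by positivity, ?_⟩
  intro x hx
  have hxr : ‖x‖ ≤ r := by rwa [hX] at hx
  set u : EuclideanSpace ℝ (Fin l) := Matrix.toEuclideanLin A x - b with hu
  set S := {w : EuclideanSpace ℝ (Fin n) | ∃ z : EuclideanSpace ℝ (Fin n),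
      (∀ x' ∈ X, (inner ℝ z (x - x') : ℝ) ≥ 0) ∧
      w = Matrix.toEuclideanLin Aᵀ (Matrix.toEuclideanLin A x - b) + z} with hS
  have hSne : S.Nonempty := ⟨Matrix.toEuclideanLin Aᵀ (Matrix.toEuclideanLin A x - b),
    0, fun x' _ => by simp, by simp⟩
  have key : ∀ w ∈ S, ρ / ((K : ℝ) * (ρ + 2 * r)) * ‖u‖ ≤ ‖w‖ := by
    rintro w ⟨z, hzc, rfl⟩
    set g : EuclideanSpace ℝ (Fin n) := Matrix.toEuclideanLin Aᵀ u with hg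
    -- normal cone estimate: ρ‖z‖ ≤ ⟨z, x - xhat⟩
    have hz1 : ρ * ‖z‖ ≤ (inner ℝ z (x - xhat) : ℝ) := by
      rcases eq_or_ne z 0 with rfl | hz0
      · simp
      · have hznorm : (0 : ℝ) < ‖z‖ := norm_pos_iff.mpr hz0
        have hx' : xhat + (ρ / ‖z‖) • z ∈ X := by
          rw [hX]
          have : ‖xhat + (ρ / ‖z‖) • z‖ ≤ ‖xhat‖ + ‖(ρ / ‖z‖) • z‖ := norm_add_le _ _
          have h2 : ‖(ρ / ‖z‖) • z‖ = ρ := by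
            rw [norm_smul, Real.norm_eq_abs, abs_of_pos (by positivity)]
            field_simp
          simp only [Set.mem_setOf_eq]
          rw [h2] at this
          linarith [this]
        have := hzc _ hx'
        have hexp : (inner ℝ z (x - (xhat + (ρ / ‖z‖) • z)) : ℝ)
            = inner ℝ z (x - xhat) - (ρ / ‖z‖) * (‖z‖ * ‖z‖) := by
          rw [show x - (xhat + (ρ / ‖z‖) • z) = (x - xhat) - (ρ / ‖z‖) • z by abel]
          rw [inner_sub_right, real_inner_smul_right, real_inner_self_eq_norm_mul_norm]
        rw [hexp] at this
        have : (ρ / ‖z‖) * (‖z‖ * ‖z‖) ≤ (inner ℝ z (x - xhat) : ℝ) := by linarith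
        calc ρ * ‖z‖ = (ρ / ‖z‖) * (‖z‖ * ‖z‖) := by field_simp
          _ ≤ _ := this
    -- ⟨g, x - xhat⟩ = ‖u‖²
    have hg1 : (inner ℝ g (x - xhat) : ℝ) = ‖u‖ ^ 2 := by
      rw [hg, hadj, map_sub, hfeas, ← hu, real_inner_self_eq_norm_sq]
    -- Cauchy-Schwarz and norm bound
    have hCS : (inner ℝ (g + z) (x - xhat) : ℝ) ≤ ‖g + z‖ * (2 * r) := by
      calc (inner ℝ (g + z) (x - xhat) : ℝ) ≤ ‖g + z‖ * ‖x - xhat‖ := real_inner_le_norm _ _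
        _ ≤ ‖g + z‖ * (2 * r) := by
            apply mul_le_mul_of_nonneg_left _ (norm_nonneg _)
            calc ‖x - xhat‖ ≤ ‖x‖ + ‖xhat‖ := norm_sub_le _ _
              _ ≤ 2 * r := by linarith
    have hsum : (inner ℝ (g + z) (x - xhat) : ℝ) = ‖u‖ ^ 2 + inner ℝ z (x - xhat) := by
      rw [inner_add_left, hg1]
    have hzle : ρ * ‖z‖ ≤ ‖g + z‖ * (2 * r) := by nlinarith [sq_nonneg ‖u‖]
    have hub : ‖u‖ ≤ (K : ℝ) * (‖g + z‖ + ‖z‖) := by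
      calc ‖u‖ ≤ (K : ℝ) * ‖g‖ := hKbound u
        _ ≤ (K : ℝ) * (‖g + z‖ + ‖z‖) := by
            apply mul_le_mul_of_nonneg_left _ (K.coe_nonneg)
            calc ‖g‖ = ‖(g + z) - z‖ := by rw [add_sub_cancel_right]
              _ ≤ ‖g + z‖ + ‖z‖ := norm_sub_le _ _
    have hKpos : (0 : ℝ) < K := hK
    rw [div_mul_eq_mul_div, div_le_iff₀ (by positivity)]
    nlinarith [mul_le_mul_of_nonneg_left hub hρ.le,
      mul_le_mul_of_nonneg_left hzle K.coe_nonneg,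
      norm_nonneg (g + z), norm_nonneg z, norm_nonneg u]
  rw [Metric.infDist_eq_iInf]
  have : Nonempty S := hSne.to_subtype
  apply le_ciInf
  intro w
  have := key w w.2
  simpa [dist_eq_norm] using this
end

section
/- Let E be a real normed space, let S ⊆ E be a nonempty set, let a, g ∈ E, and let β > 0, v > 0, r ≥ 0, ε ≥ 0. Suppose (i) v·r ≤ dist(−a, {s/β : s ∈ S}) and (ii) dist(0, {g + β·a + s : s ∈ S}) ≤ ε. Then r ≤ (ε + ‖g‖) / (v·β). -/
/-- the feasibility-bound step: if `v·r ≤ dist(−a, S/β)` and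
`dist(0, g + βa + S) ≤ ε`, then `r ≤ (ε + ‖g‖)/(vβ)`. -/
theorem feasibility_bound_step
    {E : Type*} [NormedAddCommGroup E] [NormedSpace ℝ E]
    (S : Set E) (hS : S.Nonempty) (a g : E)
    (β v r ε : ℝ) (hβ : 0 < β) (hv : 0 < v) (hr : 0 ≤ r) (hε : 0 ≤ ε)
    (h1 : v * r ≤ Metric.infDist (-a) {u : E | ∃ s ∈ S, u = (1 / β) • s})
    (h2 : Metric.infDist 0 {u : E | ∃ s ∈ S, u = g + β • a + s} ≤ ε) :
    r ≤ (ε + ‖g‖) / (v * β) := by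
  have hne : ({u : E | ∃ s ∈ S, u = g + β • a + s} : Set E).Nonempty := by
    obtain ⟨s, hs⟩ := hS
    exact ⟨g + β • a + s, s, hs, rfl⟩
  have key : v * r * β - ‖g‖ ≤ Metric.infDist 0 {u : E | ∃ s ∈ S, u = g + β • a + s} := by
    refine le_of_not_gt fun hlt => ?_
    obtain ⟨y, ⟨s, hs, rfl⟩, hdy⟩ := (Metric.infDist_lt_iff hne).mp hlt
    have hmem : (1 / β) • s ∈ {u : E | ∃ s ∈ S, u = (1 / β) • s} := ⟨s, hs, rfl⟩
    have h3 : v * r ≤ dist (-a) ((1 / β) • s) :=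
      h1.trans (Metric.infDist_le_dist_of_mem hmem)
    have hd : dist (-a) ((1 / β) • s) = ‖a + (1 / β) • s‖ := by
      rw [dist_eq_norm, ← norm_neg]
      congr 1
      abel
    have hscale : β * ‖a + (1 / β) • s‖ = ‖β • a + s‖ := by
      have he : β • (a + (1 / β) • s) = β • a + s := by
        rw [smul_add, smul_smul]
        field_simp
        rw [one_smul]
      rw [← he, norm_smul, Real.norm_eq_abs, abs_of_pos hβ]
    have h4 : v * r * β ≤ ‖β • a + s‖ := by
      rw [← hscale]
      calc v * r * β = β * (v * r) := by ring
        _ ≤ β * ‖a + (1 / β) • s‖ := by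
            apply mul_le_mul_of_nonneg_left _ hβ.le
            rw [← hd]; exact h3
    have h5 : ‖β • a + s‖ ≤ ‖g + β • a + s‖ + ‖g‖ := by
      have : β • a + s = (g + β • a + s) - g := by abel
      rw [this]
      exact norm_sub_le _ _
    have : dist (0 : E) (g + β • a + s) = ‖g + β • a + s‖ := by
      rw [dist_eq_norm, zero_sub, norm_neg]
    linarith
  have hfinal : v * r * β ≤ ε + ‖g‖ := by linarith
  rw [le_div_iff₀ (by positivity)]
  nlinarith
end

section
/- Consider the problem min over x ∈ ℝⁿ of f₀(x) = g(x) + h(x) subject to c(x) = 0, where g : ℝⁿ → ℝ is differentiable, h : ℝⁿ → ℝ is convex, and c : ℝⁿ → ℝ^l is differentiable with Jacobian J_c(x). Let ε > 0, β₀ > 0, σ > 1, w₀ > 0, set β_k = β₀σ^k, and let (x^k)_{k≥0} ⊆ ℝⁿ and (y^k)_{k≥0} ⊆ ℝ^l satisfy: (a) y^0 = 0 and y^{k+1} = y^k + w_k c(x^{k+1}) where w_k = w₀ min{1, γ_k/‖c(x^{k+1})‖} (w_k = w₀ if c(x^{k+1}) = 0) and γ_k = (log 2)²‖c(x^0)‖/((k+1)(log(k+2))²);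 (b) for every k ≥ 0, dist(0, {∇g(x^{k+1}) + J_c(x^{k+1})ᵀ(y^k + β_k c(x^{k+1})) + s : s ∈ ∂h(x^{k+1})}) ≤ ε; (c) (regularity) there is v > 0 with v‖c(x^k)‖ ≤ dist(−J_c(x^k)ᵀc(x^k), {s/β_{k−1} : s ∈ ∂h(x^k)}) for all k ≥ 1; (d) ‖∇g(x^k)‖ ≤ B₀ and the operator norm of J_c(x^k) is at most B_c for all k. Let y_max = w₀‖c(x^0)‖(log 2)²·∑_{t=0}^{∞} 1/((t+1)(log(t+2))²) and K = ⌈log_σ((ε + B₀ + B_c·y_max)/(v·β₀·ε))⌉ + 1. Then x^K is an ε-KKT point: ‖c(x^K)‖ ≤ ε and, with y = y^{K−1} + β_{K−1}c(x^K), dist(0, {∇g(x^K) + J_c(x^K)ᵀ y + s : s ∈ ∂h(x^K)}) ≤ ε. -/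
open scoped Classical

set_option maxHeartbeats 1000000 in

lemma bertrand_summable :
    Summable (fun t : ℕ => 1 / (((t : ℝ) + 1) * (Real.log ((t : ℝ) + 2)) ^ 2)) := by
  set F : ℕ → ℝ := fun m => 1 / ((m : ℝ) * (Real.log ((m : ℝ) + 1)) ^ 2) with hF
  have hFnn : ∀ m, 0 ≤ F m := by intro m; positivity
  have hFmono : ∀ ⦃m n : ℕ⦄, 0 < m → m ≤ n → F n ≤ F m := by
    intro m n hm hmn
    apply one_div_le_one_div_of_le
    · have h1 : (0:ℝ) < (m:ℝ) := by exact_mod_cast hm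
      have h2 : (0:ℝ) < Real.log ((m:ℝ) + 1) := by
        apply Real.log_pos; linarith
      positivity
    · have h1 : (m:ℝ) ≤ (n:ℝ) := by exact_mod_cast hmn
      have h2 : (0:ℝ) < Real.log ((m:ℝ) + 1) := by
        apply Real.log_pos
        have : (1:ℝ) ≤ (m:ℝ) := by exact_mod_cast hm
        linarith
      have h3 : Real.log ((m:ℝ) + 1) ≤ Real.log ((n:ℝ) + 1) :=
        Real.log_le_log (by linarith) (by linarith)
      have := mul_le_mul h1 (pow_le_pow_left₀ h2.le h3 2) (by positivity) (by exact_mod_cast Nat.zero_le n)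
      exact this
  have hcond : Summable (fun k : ℕ => (2 : ℝ) ^ k * F (2 ^ k)) := by
    rw [← summable_nat_add_iff 1]
    refine Summable.of_nonneg_of_le
      (f := fun k : ℕ => (1 / (Real.log 2) ^ 2) * (1 / ((k:ℝ) + 1) ^ 2))
      (fun k => mul_nonneg (by positivity) (hFnn _)) (fun k => ?_) ?_
    · 
      have h2k : (0:ℝ) < (2:ℝ) ^ (k+1) := by positivity
      have hlog2 : (0:ℝ) < Real.log 2 := Real.log_pos (by norm_num)
      have hcast : ((2 ^ (k+1) : ℕ) : ℝ) = (2:ℝ) ^ (k+1) := by push_cast; ring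
      have hlb : ((k:ℝ) + 1) * Real.log 2 ≤ Real.log ((2:ℝ) ^ (k+1) + 1) := by
        have := Real.log_le_log (by positivity) (by linarith : (2:ℝ)^(k+1) ≤ (2:ℝ)^(k+1) + 1)
        rw [Real.log_pow] at this
        push_cast at this ⊢
        linarith
      have hlogpos : (0:ℝ) < Real.log ((2:ℝ) ^ (k+1) + 1) := by
        nlinarith [hlog2]
      have : F (2 ^ (k+1)) = 1 / ((2:ℝ)^(k+1) * (Real.log ((2:ℝ)^(k+1) + 1)) ^ 2) := by
        simp only [hF, hcast]
      rw [this]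
      rw [mul_one_div]
      rw [div_le_iff₀ (by positivity)]
      have hsq : (((k:ℝ)+1) * Real.log 2) ^ 2 ≤ (Real.log ((2:ℝ)^(k+1)+1)) ^ 2 :=
        pow_le_pow_left₀ (by positivity) hlb 2
      have expand : (1 / (Real.log 2)^2 * (1/((k:ℝ)+1)^2)) * ((2:ℝ)^(k+1) * (Real.log ((2:ℝ)^(k+1)+1))^2)
          ≥ (1 / (Real.log 2)^2 * (1/((k:ℝ)+1)^2)) * ((2:ℝ)^(k+1) * (((k:ℝ)+1) * Real.log 2)^2) := by
        apply mul_le_mul_of_nonneg_left _ (by positivity)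
        exact mul_le_mul_of_nonneg_left hsq (by positivity)
      have hkpos : (0:ℝ) < (k:ℝ)+1 := by positivity
      have : (1 / (Real.log 2)^2 * (1/((k:ℝ)+1)^2)) * ((2:ℝ)^(k+1) * (((k:ℝ)+1) * Real.log 2)^2) = (2:ℝ)^(k+1) := by
        field_simp
      linarith [expand, this.symm.le]
    · apply Summable.mul_left
      have : Summable (fun k : ℕ => 1 / ((k:ℝ)) ^ 2) := by
        rw [Real.summable_one_div_nat_pow]; norm_num
      have := (summable_nat_add_iff 1).mpr this
      exact this.congr (fun k => by push_cast; ring)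
  have hFsum : Summable F := (summable_condensed_iff_of_nonneg hFnn hFmono).mp hcond
  have := (summable_nat_add_iff 1).mpr hFsum
  exact this.congr (fun t => by simp only [hF]; push_cast; ring_nf)


set_option maxHeartbeats 1000000 in
/-- ε-KKT reachability part of Theorem 2 of the paper: for the
inexact augmented Lagrangian method with dual steps
`w_k = w₀ min{1, γ_k/‖c(x^{k+1})‖}`, `γ_k = (log 2)²‖c(x⁰)‖/((k+1)(log(k+2))²)`,
penalties `β_k = β₀σ^k`, ε-stationarity of each subproblem solution, the
regularity condition, and uniform bounds `B₀`, `B_c`, the iterate `x^K` with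
`K = ⌈log_σ((ε + B₀ + B_c y_max)/(vβ₀ε))⌉ + 1` is an ε-KKT point, certified by
the multiplier `y^{K−1} + β_{K−1} c(x^K)`. -/
theorem ialm_eps_kkt
    (n l : ℕ) (hn : 0 < n) (hl : 0 < l)
    (g : EuclideanSpace ℝ (Fin n) → ℝ)
    (g' : EuclideanSpace ℝ (Fin n) → EuclideanSpace ℝ (Fin n))
    (hg : ∀ z, HasGradientAt g (g' z) z)
    (h : EuclideanSpace ℝ (Fin n) → ℝ) (hconv : ConvexOn ℝ Set.univ h)
    (c : EuclideanSpace ℝ (Fin n) → EuclideanSpace ℝ (Fin l))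
    (Jc : EuclideanSpace ℝ (Fin n) →
      (EuclideanSpace ℝ (Fin n) →L[ℝ] EuclideanSpace ℝ (Fin l)))
    (hc : ∀ z, HasFDerivAt c (Jc z) z)
    (ε β₀ σ w₀ v B₀ Bc : ℝ)
    (hε : 0 < ε) (hβ₀ : 0 < β₀) (hσ : 1 < σ) (hw₀ : 0 < w₀) (hv : 0 < v)
    (x : ℕ → EuclideanSpace ℝ (Fin n)) (y : ℕ → EuclideanSpace ℝ (Fin l))
    (β γ w : ℕ → ℝ)
    (hβ : ∀ k : ℕ, β k = β₀ * σ ^ k)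
    (hγ : ∀ k : ℕ, γ k = (Real.log 2) ^ 2 * ‖c (x 0)‖ /
      (((k : ℝ) + 1) * (Real.log ((k : ℝ) + 2)) ^ 2))
    (hw : ∀ k : ℕ, w k =
      if c (x (k + 1)) = 0 then w₀ else w₀ * min 1 (γ k / ‖c (x (k + 1))‖))
    (hy0 : y 0 = 0)
    (hyk : ∀ k : ℕ, y (k + 1) = y k + w k • c (x (k + 1)))
    (hstat : ∀ k : ℕ, Metric.infDist 0
      {u : EuclideanSpace ℝ (Fin n) | ∃ s,
        (∀ z, h z ≥ h (x (k + 1)) + (inner ℝ s (z - x (k + 1)) : ℝ)) ∧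
        u = g' (x (k + 1)) +
          ContinuousLinearMap.adjoint (Jc (x (k + 1))) (y k + β k • c (x (k + 1))) + s}
      ≤ ε)
    (hreg : ∀ k : ℕ, 1 ≤ k →
      v * ‖c (x k)‖ ≤ Metric.infDist
        (-(ContinuousLinearMap.adjoint (Jc (x k)) (c (x k))))
        {u : EuclideanSpace ℝ (Fin n) | ∃ s,
          (∀ z, h z ≥ h (x k) + (inner ℝ s (z - x k) : ℝ)) ∧
          u = (1 / β (k - 1)) • s})
    (hB₀ : ∀ k : ℕ, ‖g' (x k)‖ ≤ B₀)
    (hBc : ∀ k : ℕ, ‖Jc (x k)‖ ≤ Bc)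
    (ymax : ℝ)
    (hymax : ymax = w₀ * ‖c (x 0)‖ * (Real.log 2) ^ 2 *
      ∑' t : ℕ, 1 / (((t : ℝ) + 1) * (Real.log ((t : ℝ) + 2)) ^ 2))
    (K : ℕ)
    (hK : K = ⌈Real.logb σ ((ε + B₀ + Bc * ymax) / (v * β₀ * ε))⌉₊ + 1) :
    ‖c (x K)‖ ≤ ε ∧
    Metric.infDist 0
      {u : EuclideanSpace ℝ (Fin n) | ∃ s,
        (∀ z, h z ≥ h (x K) + (inner ℝ s (z - x K) : ℝ)) ∧
        u = g' (x K) +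
          ContinuousLinearMap.adjoint (Jc (x K))
            (y (K - 1) + β (K - 1) • c (x K)) + s} ≤ ε := by
  classical
  have hσ0 : (0:ℝ) < σ := lt_trans one_pos hσ
  have hK1 : 1 ≤ K := by omega
  have hKsucc : K - 1 + 1 = K := Nat.succ_pred_eq_of_pos hK1
  have hstatK := hstat (K - 1)
  rw [hKsucc] at hstatK
  refine ⟨?_, hstatK⟩
  have hB₀0 : 0 ≤ B₀ := (norm_nonneg _).trans (hB₀ 0)
  have hBc0 : 0 ≤ Bc := (norm_nonneg _).trans (hBc 0)
  have hsum := bertrand_summable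
  have hymax0 : 0 ≤ ymax := by
    rw [hymax]
    have : 0 ≤ ∑' t : ℕ, 1 / (((t : ℝ) + 1) * (Real.log ((t : ℝ) + 2)) ^ 2) :=
      tsum_nonneg (fun t => by positivity)
    positivity
  have hγ0 : ∀ k : ℕ, 0 ≤ γ k := by
    intro k; rw [hγ k]; positivity
  have hterm : ∀ k : ℕ, ‖w k • c (x (k + 1))‖ ≤ w₀ * γ k := by
    intro k
    by_cases hc0 : c (x (k + 1)) = 0
    · simp only [hc0, smul_zero, norm_zero]
      exact mul_nonneg hw₀.le (hγ0 k)
    · have hn0 : 0 < ‖c (x (k + 1))‖ := norm_pos_iff.mpr hc0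
      rw [norm_smul, hw k, if_neg hc0, Real.norm_eq_abs]
      have hmin0 : 0 ≤ min 1 (γ k / ‖c (x (k + 1))‖) :=
        le_min zero_le_one (div_nonneg (hγ0 k) (norm_nonneg _))
      rw [abs_of_nonneg (mul_nonneg hw₀.le hmin0)]
      calc w₀ * min 1 (γ k / ‖c (x (k + 1))‖) * ‖c (x (k + 1))‖
          ≤ w₀ * (γ k / ‖c (x (k + 1))‖) * ‖c (x (k + 1))‖ := by
            apply mul_le_mul_of_nonneg_right _ hn0.le
            exact mul_le_mul_of_nonneg_left (min_le_right _ _) hw₀.le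
        _ = w₀ * γ k := by field_simp
  have hynorm : ∀ k : ℕ, ‖y k‖ ≤ ymax := by
    have hpartial : ∀ k : ℕ, ‖y k‖ ≤ ∑ t ∈ Finset.range k, w₀ * γ t := by
      intro k
      induction k with
      | zero => simp [hy0]
      | succ k ih =>
        rw [hyk k, Finset.sum_range_succ]
        calc ‖y k + w k • c (x (k + 1))‖ ≤ ‖y k‖ + ‖w k • c (x (k + 1))‖ := norm_add_le _ _
          _ ≤ (∑ t ∈ Finset.range k, w₀ * γ t) + w₀ * γ k := add_le_add ih (hterm k)
    intro k
    refine (hpartial k).trans ?_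
    have heq : ∀ t : ℕ, w₀ * γ t = (w₀ * ‖c (x 0)‖ * (Real.log 2) ^ 2) *
        (1 / (((t : ℝ) + 1) * (Real.log ((t : ℝ) + 2)) ^ 2)) := by
      intro t; rw [hγ t]; ring
    calc ∑ t ∈ Finset.range k, w₀ * γ t
        = (w₀ * ‖c (x 0)‖ * (Real.log 2) ^ 2) *
          ∑ t ∈ Finset.range k, 1 / (((t : ℝ) + 1) * (Real.log ((t : ℝ) + 2)) ^ 2) := by
          rw [Finset.mul_sum]; exact Finset.sum_congr rfl (fun t _ => heq t)
      _ ≤ (w₀ * ‖c (x 0)‖ * (Real.log 2) ^ 2) *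
          ∑' t : ℕ, 1 / (((t : ℝ) + 1) * (Real.log ((t : ℝ) + 2)) ^ 2) := by
          apply mul_le_mul_of_nonneg_left _ (by positivity)
          exact Summable.sum_le_tsum _ (fun t _ => by positivity) hsum
      _ = ymax := by rw [hymax]
  have hApos : 0 < ε + B₀ + Bc * ymax := by
    have := mul_nonneg hBc0 hymax0; linarith
  have hβpos : 0 < β (K - 1) := by
    rw [hβ]; exact mul_pos hβ₀ (pow_pos hσ0 _)
  -- lower bound on the penalty parameter
  have hβbig : (ε + B₀ + Bc * ymax) / (v * ε) ≤ β (K - 1) := by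
    have hr : 0 < (ε + B₀ + Bc * ymax) / (v * β₀ * ε) := by
      apply div_pos hApos (by positivity)
    have hKm1 : K - 1 = ⌈Real.logb σ ((ε + B₀ + Bc * ymax) / (v * β₀ * ε))⌉₊ := by
      omega
    have hlogb : Real.logb σ ((ε + B₀ + Bc * ymax) / (v * β₀ * ε)) ≤ ((K - 1 : ℕ) : ℝ) := by
      rw [hKm1]; exact Nat.le_ceil _
    have h2 : (ε + B₀ + Bc * ymax) / (v * β₀ * ε) ≤ σ ^ (K - 1) := by
      have := Real.rpow_le_rpow_of_exponent_le hσ.le hlogb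
      rwa [Real.rpow_logb hσ0 (ne_of_gt hσ) hr, Real.rpow_natCast] at this
    rw [hβ]
    rw [div_le_iff₀ (by positivity)] at h2 ⊢
    calc ε + B₀ + Bc * ymax ≤ σ ^ (K - 1) * (v * β₀ * ε) := h2
      _ = β₀ * σ ^ (K - 1) * (v * ε) := by ring
  -- the key bound
  have hkey : v * ‖c (x K)‖ * β (K - 1) ≤ ε + B₀ + Bc * ymax := by
    refine le_of_forall_pos_le_add (fun δ hδ => ?_)
    by_cases hsub : ∃ s : EuclideanSpace ℝ (Fin n),
        ∀ z, h z ≥ h (x K) + (inner ℝ s (z - x K) : ℝ)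
    · obtain ⟨s₀, hs₀⟩ := hsub
      have hSne : {u : EuclideanSpace ℝ (Fin n) | ∃ s,
          (∀ z, h z ≥ h (x K) + (inner ℝ s (z - x K) : ℝ)) ∧
          u = g' (x K) +
            ContinuousLinearMap.adjoint (Jc (x K)) (y (K - 1) + β (K - 1) • c (x K)) + s}.Nonempty :=
        ⟨_, s₀, hs₀, rfl⟩
      have hlt := lt_of_le_of_lt hstatK (by linarith : ε < ε + δ)
      obtain ⟨u, huS, hud⟩ := (Metric.infDist_lt_iff hSne).mp hlt
      obtain ⟨s, hsgrad, hueq⟩ := huS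
      rw [dist_zero_left] at hud
      have hbne : β (K - 1) ≠ 0 := ne_of_gt hβpos
      have hdiff : -(ContinuousLinearMap.adjoint (Jc (x K)) (c (x K))) - (1 / β (K - 1)) • s =
          (1 / β (K - 1)) • (g' (x K) + ContinuousLinearMap.adjoint (Jc (x K)) (y (K - 1)) - u) := by
        have hseq : s = u - g' (x K) - ContinuousLinearMap.adjoint (Jc (x K)) (y (K - 1))
            - β (K - 1) • ContinuousLinearMap.adjoint (Jc (x K)) (c (x K)) := by
          rw [hueq, map_add, map_smul]; abel
        rw [hseq]
        match_scalars <;> field_simp <;> ring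
      have hmem : (1 / β (K - 1)) • s ∈ {u : EuclideanSpace ℝ (Fin n) | ∃ s',
          (∀ z, h z ≥ h (x K) + (inner ℝ s' (z - x K) : ℝ)) ∧
          u = (1 / β (K - 1)) • s'} := ⟨s, hsgrad, rfl⟩
      have hchain : v * ‖c (x K)‖ ≤
          ‖-(ContinuousLinearMap.adjoint (Jc (x K)) (c (x K))) - (1 / β (K - 1)) • s‖ := by
        refine (hreg K hK1).trans ?_
        refine (Metric.infDist_le_dist_of_mem hmem).trans ?_
        rw [dist_eq_norm]
      rw [hdiff, norm_smul, Real.norm_eq_abs,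
        abs_of_pos (by positivity : (0:ℝ) < 1 / β (K - 1))] at hchain
      have hnorm : ‖g' (x K) + ContinuousLinearMap.adjoint (Jc (x K)) (y (K - 1)) - u‖
          ≤ B₀ + Bc * ymax + (ε + δ) := by
        have h1 : ‖ContinuousLinearMap.adjoint (Jc (x K)) (y (K - 1))‖
            ≤ ‖ContinuousLinearMap.adjoint (Jc (x K))‖ * ‖y (K - 1)‖ :=
          (ContinuousLinearMap.adjoint (Jc (x K))).le_opNorm _
        have h2 : ‖ContinuousLinearMap.adjoint (Jc (x K))‖ = ‖Jc (x K)‖ :=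
          LinearIsometryEquiv.norm_map _ _
        have h3 : ‖ContinuousLinearMap.adjoint (Jc (x K))‖ * ‖y (K - 1)‖ ≤ Bc * ymax := by
          rw [h2]
          exact mul_le_mul (hBc K) (hynorm (K - 1)) (norm_nonneg _) hBc0
        have h4 := hB₀ K
        calc ‖g' (x K) + ContinuousLinearMap.adjoint (Jc (x K)) (y (K - 1)) - u‖
            ≤ ‖g' (x K) + ContinuousLinearMap.adjoint (Jc (x K)) (y (K - 1))‖ + ‖u‖ :=
              norm_sub_le _ _
          _ ≤ ‖g' (x K)‖ + ‖ContinuousLinearMap.adjoint (Jc (x K)) (y (K - 1))‖ + ‖u‖ := by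
              linarith [norm_add_le (g' (x K)) (ContinuousLinearMap.adjoint (Jc (x K)) (y (K - 1)))]
          _ ≤ B₀ + Bc * ymax + (ε + δ) := by
              linarith [h1.trans h3, hud.le]
      have hfin : v * ‖c (x K)‖ ≤ (1 / β (K - 1)) * (ε + B₀ + Bc * ymax + δ) := by
        refine hchain.trans ?_
        apply mul_le_mul_of_nonneg_left _ (by positivity : (0:ℝ) ≤ 1 / β (K - 1))
        linarith
      calc v * ‖c (x K)‖ * β (K - 1)
          ≤ ((1 / β (K - 1)) * (ε + B₀ + Bc * ymax + δ)) * β (K - 1) :=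
            mul_le_mul_of_nonneg_right hfin hβpos.le
        _ = ε + B₀ + Bc * ymax + δ := by field_simp
    · have hempty : {u : EuclideanSpace ℝ (Fin n) | ∃ s,
          (∀ z, h z ≥ h (x K) + (inner ℝ s (z - x K) : ℝ)) ∧
          u = (1 / β (K - 1)) • s} = ∅ := by
        rw [Set.eq_empty_iff_forall_notMem]
        rintro u ⟨s, hs, -⟩
        exact hsub ⟨s, hs⟩
      have hregK := hreg K hK1
      rw [hempty, Metric.infDist_empty] at hregK
      have hc0 : ‖c (x K)‖ = 0 :=
        le_antisymm (by nlinarith) (norm_nonneg _)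
      rw [hc0, mul_zero, zero_mul]
      linarith
  have h1 : v * ‖c (x K)‖ ≤ (ε + B₀ + Bc * ymax) / β (K - 1) := by
    rw [le_div_iff₀ hβpos]; exact hkey
  have h2 : (ε + B₀ + Bc * ymax) / β (K - 1) ≤ v * ε := by
    rw [div_le_iff₀ hβpos]
    calc ε + B₀ + Bc * ymax
        = ((ε + B₀ + Bc * ymax) / (v * ε)) * (v * ε) := by field_simp
      _ ≤ β (K - 1) * (v * ε) := mul_le_mul_of_nonneg_right hβbig (by positivity)
      _ = v * ε * β (K - 1) := by ring
  exact (mul_le_mul_iff_right₀ hv).mp (h1.trans h2)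
end

section
/- Consider the problem min over x ∈ ℝⁿ of f₀(x) = g(x) + h(x) subject to c(x) = 0, where g : ℝⁿ → ℝ is differentiable, h : ℝⁿ → ℝ is convex, and c : ℝⁿ → ℝ^l is differentiable with Jacobian J_c(x). Let ε > 0, β₀ > 0, σ > 1, M > 0, q a nonnegative integer, set β_k = β₀σ^k, and let (x^k)_{k≥0} ⊆ ℝⁿ and (y^k)_{k≥0} ⊆ ℝ^l satisfy: (a) y^0 = 0 and y^{k+1} = y^k + M(k+1)^q · c(x^{k+1})/‖c(x^{k+1})‖ when c(x^{k+1}) ≠ 0, and y^{k+1} = y^k otherwise; (b) for every k ≥ 0, dist(0, {∇g(x^{k+1}) + J_c(x^{k+1})ᵀ(y^k + β_k c(x^{k+1})) + s : s ∈ ∂h(x^{k+1})}) ≤ ε; (c) (regularity) there is v > 0 with v‖c(x^k)‖ ≤ dist(−J_c(x^k)ᵀc(x^k), {s/β_{k−1} : s ∈ ∂h(x^k)}) for all k ≥ 1; (d) ‖∇g(x^k)‖ ≤ B₀ and the operator norm of J_c(x^k) is at most B_c for all k. Then there exists K ≥ 1 such that x^K is an ε-KKT point: ‖c(x^K)‖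 ≤ ε and, with y = y^{K−1} + β_{K−1}c(x^K), dist(0, {∇g(x^K) + J_c(x^K)ᵀ y + s : s ∈ ∂h(x^K)}) ≤ ε. -/
open scoped Classical

set_option maxHeartbeats 2000000 in
/-- ε-KKT reachability part of Theorem 3 of the paper: for the
inexact augmented Lagrangian method with general dual step sizes
`w_k = M(k+1)^q/‖c(x^{k+1})‖`, penalties `β_k = β₀σ^k`, ε-stationarity of each
subproblem solution, the regularity condition, and uniform bounds `B₀`, `B_c`,
some outer iterate `x^K` (K ≥ 1) is an ε-KKT point, certified by the multiplier
`y^{K−1} + β_{K−1} c(x^K)`. -/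
theorem ialm_eps_kkt_general_steps
    (n l : ℕ) (hn : 0 < n) (hl : 0 < l)
    (g : EuclideanSpace ℝ (Fin n) → ℝ)
    (g' : EuclideanSpace ℝ (Fin n) → EuclideanSpace ℝ (Fin n))
    (hg : ∀ z, HasGradientAt g (g' z) z)
    (h : EuclideanSpace ℝ (Fin n) → ℝ) (hconv : ConvexOn ℝ Set.univ h)
    (c : EuclideanSpace ℝ (Fin n) → EuclideanSpace ℝ (Fin l))
    (Jc : EuclideanSpace ℝ (Fin n) →
      (EuclideanSpace ℝ (Fin n) →L[ℝ] EuclideanSpace ℝ (Fin l)))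
    (hc : ∀ z, HasFDerivAt c (Jc z) z)
    (ε β₀ σ M v B₀ Bc : ℝ) (q : ℕ)
    (hε : 0 < ε) (hβ₀ : 0 < β₀) (hσ : 1 < σ) (hM : 0 < M) (hv : 0 < v)
    (x : ℕ → EuclideanSpace ℝ (Fin n)) (y : ℕ → EuclideanSpace ℝ (Fin l))
    (β : ℕ → ℝ)
    (hβ : ∀ k : ℕ, β k = β₀ * σ ^ k)
    (hy0 : y 0 = 0)
    (hyk : ∀ k : ℕ, y (k + 1) =
      if c (x (k + 1)) = 0 then y k
      else y k + ((M * ((k : ℝ) + 1) ^ q) / ‖c (x (k + 1))‖) • c (x (k + 1)))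
    (hstat : ∀ k : ℕ, Metric.infDist 0
      {u : EuclideanSpace ℝ (Fin n) | ∃ s,
        (∀ z, h z ≥ h (x (k + 1)) + (inner ℝ s (z - x (k + 1)) : ℝ)) ∧
        u = g' (x (k + 1)) +
          ContinuousLinearMap.adjoint (Jc (x (k + 1))) (y k + β k • c (x (k + 1))) + s}
      ≤ ε)
    (hreg : ∀ k : ℕ, 1 ≤ k →
      v * ‖c (x k)‖ ≤ Metric.infDist
        (-(ContinuousLinearMap.adjoint (Jc (x k)) (c (x k))))
        {u : EuclideanSpace ℝ (Fin n) | ∃ s,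
          (∀ z, h z ≥ h (x k) + (inner ℝ s (z - x k) : ℝ)) ∧
          u = (1 / β (k - 1)) • s})
    (hB₀ : ∀ k : ℕ, ‖g' (x k)‖ ≤ B₀)
    (hBc : ∀ k : ℕ, ‖Jc (x k)‖ ≤ Bc) :
    ∃ K : ℕ, 1 ≤ K ∧
      ‖c (x K)‖ ≤ ε ∧
      Metric.infDist 0
        {u : EuclideanSpace ℝ (Fin n) | ∃ s,
          (∀ z, h z ≥ h (x K) + (inner ℝ s (z - x K) : ℝ)) ∧
          u = g' (x K) +
            ContinuousLinearMap.adjoint (Jc (x K))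
              (y (K - 1) + β (K - 1) • c (x K)) + s} ≤ ε := by
  -- Basic positivity facts
  have hσ0 : (0:ℝ) < σ := lt_trans one_pos hσ
  have hβpos : ∀ k : ℕ, 0 < β k := by
    intro k; rw [hβ]; positivity
  have hB₀0 : 0 ≤ B₀ := le_trans (norm_nonneg _) (hB₀ 0)
  have hBc0 : 0 ≤ Bc := le_trans (norm_nonneg _) (hBc 0)
  -- Bound on the dual iterates: ‖y k‖ ≤ M * k^(q+1)
  have ybound : ∀ k : ℕ, ‖y k‖ ≤ M * (k : ℝ) ^ (q + 1) := by
    intro k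
    induction k with
    | zero => simp [hy0]
    | succ k ih =>
      have step : ‖y (k + 1)‖ ≤ ‖y k‖ + M * ((k : ℝ) + 1) ^ q := by
        rw [hyk k]
        split_ifs with hc0
        · nlinarith [norm_nonneg (y k), pow_pos (by positivity : (0:ℝ) < (k:ℝ)+1) q, hM]
        · have hcn : (0:ℝ) < ‖c (x (k + 1))‖ := norm_pos_iff.mpr hc0
          calc ‖y k + ((M * ((k : ℝ) + 1) ^ q) / ‖c (x (k + 1))‖) • c (x (k + 1))‖
              ≤ ‖y k‖ + ‖((M * ((k : ℝ) + 1) ^ q) / ‖c (x (k + 1))‖) • c (x (k + 1))‖ :=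
                norm_add_le _ _
            _ = ‖y k‖ + M * ((k : ℝ) + 1) ^ q := by
                rw [norm_smul, Real.norm_eq_abs, abs_of_nonneg (by positivity),
                  div_mul_cancel₀ _ (ne_of_gt hcn)]
      have hk1 : (0:ℝ) ≤ (k:ℝ) := Nat.cast_nonneg k
      have hpow : ((k:ℝ)) ^ q ≤ ((k:ℝ) + 1) ^ q := pow_le_pow_left₀ hk1 (by linarith) q
      have : M * (k : ℝ) ^ (q + 1) + M * ((k : ℝ) + 1) ^ q ≤ M * ((k : ℝ) + 1) ^ (q + 1) := by
        have h1 : ((k:ℝ)+1) ^ (q+1) = ((k:ℝ)+1) ^ q * (k:ℝ) + ((k:ℝ)+1) ^ q := by ring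
        have h2 : (k:ℝ) ^ (q+1) = (k:ℝ) ^ q * (k:ℝ) := by ring
        rw [h1, h2]
        nlinarith [mul_le_mul_of_nonneg_right hpow hk1]
      push_cast
      calc ‖y (k+1)‖ ≤ ‖y k‖ + M * ((k : ℝ) + 1) ^ q := step
        _ ≤ M * (k : ℝ) ^ (q + 1) + M * ((k : ℝ) + 1) ^ q := by linarith
        _ ≤ M * ((k : ℝ) + 1) ^ (q + 1) := this
  -- Key estimate for each k
  have key : ∀ k : ℕ, ‖c (x (k + 1))‖ ≤ ε ∨
      v * ‖c (x (k + 1))‖ ≤ (ε + 1 + B₀ + Bc * (M * (k : ℝ) ^ (q + 1))) / β k := by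
    intro k
    by_cases hne : ∃ s : EuclideanSpace ℝ (Fin n),
        ∀ z, h z ≥ h (x (k + 1)) + (inner ℝ s (z - x (k + 1)) : ℝ)
    · -- subgradient set nonempty: extract an almost-stationary point
      right
      have hSne : Set.Nonempty {u : EuclideanSpace ℝ (Fin n) | ∃ s,
          (∀ z, h z ≥ h (x (k + 1)) + (inner ℝ s (z - x (k + 1)) : ℝ)) ∧
          u = g' (x (k + 1)) +
            ContinuousLinearMap.adjoint (Jc (x (k + 1))) (y k + β k • c (x (k + 1))) + s} := by
        obtain ⟨s, hs⟩ := hne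
        exact ⟨_, s, hs, rfl⟩
      have hlt : Metric.infDist 0 {u : EuclideanSpace ℝ (Fin n) | ∃ s,
          (∀ z, h z ≥ h (x (k + 1)) + (inner ℝ s (z - x (k + 1)) : ℝ)) ∧
          u = g' (x (k + 1)) +
            ContinuousLinearMap.adjoint (Jc (x (k + 1))) (y k + β k • c (x (k + 1))) + s}
          < ε + 1 := lt_of_le_of_lt (hstat k) (by linarith)
      obtain ⟨u, hu, hud⟩ := (Metric.infDist_lt_iff hSne).mp hlt
      obtain ⟨s, hsub, hus⟩ := hu
      have hun : ‖u‖ ≤ ε + 1 := by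
        have := hud
        rw [dist_comm, dist_zero_right] at this
        linarith
      set A := ContinuousLinearMap.adjoint (Jc (x (k + 1))) with hA
      have hβk := hβpos k
      -- the candidate element of the regularity set
      have hmem : (1 / β k) • s ∈ {u : EuclideanSpace ℝ (Fin n) | ∃ s',
          (∀ z, h z ≥ h (x (k + 1)) + (inner ℝ s' (z - x (k + 1)) : ℝ)) ∧
          u = (1 / β ((k + 1) - 1)) • s'} := by
        refine ⟨s, hsub, ?_⟩
        simp
      have hdist : dist (-(A (c (x (k + 1))))) ((1 / β k) • s)
          ≤ (ε + 1 + B₀ + Bc * ‖y k‖) / β k := by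
        have hseq : s = u - g' (x (k + 1)) - A (y k) - β k • A (c (x (k + 1))) := by
          rw [hus]; rw [map_add, map_smul]; abel
        have heq : -(A (c (x (k + 1)))) - (1 / β k) • s
            = (1 / β k) • (g' (x (k + 1)) + A (y k) - u) := by
          rw [hseq]
          rw [smul_sub, smul_sub, smul_sub, smul_smul,
            one_div_mul_cancel (ne_of_gt hβk)]
          module
        rw [dist_eq_norm, heq, norm_smul, Real.norm_eq_abs,
          abs_of_nonneg (by positivity : (0:ℝ) ≤ 1 / β k)]
        have hAy : ‖A (y k)‖ ≤ Bc * ‖y k‖ := by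
          calc ‖A (y k)‖ ≤ ‖A‖ * ‖y k‖ := A.le_opNorm _
            _ ≤ Bc * ‖y k‖ := by
                have : ‖A‖ = ‖Jc (x (k + 1))‖ := by
                  rw [hA]; exact LinearIsometryEquiv.norm_map ContinuousLinearMap.adjoint _
                rw [this]
                exact mul_le_mul_of_nonneg_right (hBc (k + 1)) (norm_nonneg _)
        have hnrm : ‖g' (x (k + 1)) + A (y k) - u‖ ≤ B₀ + Bc * ‖y k‖ + (ε + 1) := by
          calc ‖g' (x (k + 1)) + A (y k) - u‖
              ≤ ‖g' (x (k + 1)) + A (y k)‖ + ‖u‖ := norm_sub_le _ _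
            _ ≤ ‖g' (x (k + 1))‖ + ‖A (y k)‖ + ‖u‖ := by
                have := norm_add_le (g' (x (k + 1))) (A (y k)); linarith
            _ ≤ B₀ + Bc * ‖y k‖ + (ε + 1) := by
                have := hB₀ (k + 1); linarith
        calc (1 / β k) * ‖g' (x (k + 1)) + A (y k) - u‖
            ≤ (1 / β k) * (B₀ + Bc * ‖y k‖ + (ε + 1)) :=
              mul_le_mul_of_nonneg_left hnrm (by positivity)
          _ = (ε + 1 + B₀ + Bc * ‖y k‖) / β k := by ring
      have hreg' := hreg (k + 1) (Nat.le_add_left 1 k)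
      have hA' : ContinuousLinearMap.adjoint (Jc (x (k+1))) = A := hA.symm
      calc v * ‖c (x (k + 1))‖
          ≤ Metric.infDist (-(A (c (x (k + 1)))))
            {u : EuclideanSpace ℝ (Fin n) | ∃ s',
              (∀ z, h z ≥ h (x (k + 1)) + (inner ℝ s' (z - x (k + 1)) : ℝ)) ∧
              u = (1 / β ((k + 1) - 1)) • s'} := hreg'
        _ ≤ dist (-(A (c (x (k + 1))))) ((1 / β k) • s) := Metric.infDist_le_dist_of_mem hmem
        _ ≤ (ε + 1 + B₀ + Bc * ‖y k‖) / β k := hdist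
        _ ≤ (ε + 1 + B₀ + Bc * (M * (k : ℝ) ^ (q + 1))) / β k := by
            gcongr
            exact ybound k
    · -- subgradient set empty: regularity forces c (x (k+1)) = 0
      left
      have hemp : {u : EuclideanSpace ℝ (Fin n) | ∃ s,
          (∀ z, h z ≥ h (x (k + 1)) + (inner ℝ s (z - x (k + 1)) : ℝ)) ∧
          u = (1 / β ((k + 1) - 1)) • s} = ∅ := by
        rw [Set.eq_empty_iff_forall_notMem]
        rintro u ⟨s, hs, -⟩
        exact hne ⟨s, hs⟩
      have hreg' := hreg (k + 1) (Nat.le_add_left 1 k)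
      rw [hemp, Metric.infDist_empty] at hreg'
      have : ‖c (x (k + 1))‖ ≤ 0 := by
        by_contra hcon
        push_neg at hcon
        nlinarith
      linarith [le_of_lt hε, this]
  -- The bound tends to zero
  have htend : Filter.Tendsto
      (fun k : ℕ => (ε + 1 + B₀ + Bc * (M * (k : ℝ) ^ (q + 1))) / β k)
      Filter.atTop (nhds 0) := by
    have hr0 : (0:ℝ) ≤ σ⁻¹ := by positivity
    have hr1 : σ⁻¹ < 1 := inv_lt_one_of_one_lt₀ hσ
    have t1 : Filter.Tendsto (fun k : ℕ => (σ⁻¹) ^ k) Filter.atTop (nhds 0) :=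
      tendsto_pow_atTop_nhds_zero_of_lt_one hr0 hr1
    have t2 : Filter.Tendsto (fun k : ℕ => (k : ℝ) ^ (q + 1) * (σ⁻¹) ^ k)
        Filter.atTop (nhds 0) :=
      tendsto_pow_const_mul_const_pow_of_lt_one (q + 1) hr0 hr1
    have t3 : Filter.Tendsto
        (fun k : ℕ => ((ε + 1 + B₀) / β₀) * (σ⁻¹) ^ k
          + (Bc * M / β₀) * ((k : ℝ) ^ (q + 1) * (σ⁻¹) ^ k))
        Filter.atTop (nhds 0) := by
      have h0 := ((t1.const_mul ((ε + 1 + B₀) / β₀)).add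
        (t2.const_mul (Bc * M / β₀)))
      simpa only [mul_zero, add_zero] using h0
    have hfun : (fun k : ℕ => (ε + 1 + B₀ + Bc * (M * (k : ℝ) ^ (q + 1))) / β k)
        = (fun k : ℕ => ((ε + 1 + B₀) / β₀) * (σ⁻¹) ^ k
          + (Bc * M / β₀) * ((k : ℝ) ^ (q + 1) * (σ⁻¹) ^ k)) := by
      funext k
      rw [hβ k, inv_pow]
      rw [div_eq_mul_inv, mul_inv]
      ring
    rw [hfun]
    exact t3
  -- Pick k large enough
  have hvε : (0:ℝ) < v * ε := mul_pos hv hε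
  have hev : ∀ᶠ k : ℕ in Filter.atTop,
      (ε + 1 + B₀ + Bc * (M * (k : ℝ) ^ (q + 1))) / β k < v * ε := by
    have := htend.eventually (eventually_lt_nhds hvε)
    simpa using this
  obtain ⟨k, hk⟩ := hev.exists
  refine ⟨k + 1, Nat.le_add_left 1 k, ?_, ?_⟩
  · rcases key k with hle | hle
    · exact hle
    · have : v * ‖c (x (k + 1))‖ < v * ε := lt_of_le_of_lt hle hk
      exact le_of_lt ((mul_lt_mul_iff_right₀ hv).mp this)
  · have hk1 : k + 1 - 1 = k := rfl
    exact hk1 ▸ hstat k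
end
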